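/- arXiv:1001.4464 — 10 statements merged into one kernel-verified Lean document; each statement's English description precedes it below -/
import Mathlib

section
/- Degree principle: Let n ≥ 1 and let F ∈ ℝ[x_1,…,x_n] be a symmetric polynomial of (total) degree d ≥ 1. Then there exists x ∈ ℝⁿ with F(x) = 0 if and only if there exists y ∈ ℝⁿ with at most d distinct coordinates such that F(y) = 0. -/
open MvPolynomial Finset AddMonoidAlgebra

lemma tdeg_esymm {n k : ℕ} : (esymm (Fin n) ℝ k).totalDegree ≤ k := by
  rw [MvPolynomial.esymm]
  refine (totalDegree_finset_sum _ _).trans (Finset.sup_le fun s hs => ?_)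
  refine (totalDegree_finset_prod _ _).trans ?_
  rw [Finset.mem_powersetCard] at hs
  simp [hs.2]

lemma eahm_eq {n : ℕ} (t : Fin n →₀ ℕ) (r : ℝ) :
    esymmAlgHomMonomial (Fin n) t r
      = C r * ∏ i ∈ t.support, esymm (Fin n) ℝ ((i : ℕ) + 1) ^ t i := by
  rw [esymmAlgHomMonomial, esymmAlgHom_apply, aeval_monomial, algebraMap_eq]
  rfl

lemma eahm_mem {n D : ℕ} (t : Fin n →₀ ℕ) (r : ℝ) (ht : ∀ i ∈ t.support, (i : ℕ) + 1 ≤ D) :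
    esymmAlgHomMonomial (Fin n) t r ∈
      Algebra.adjoin ℝ ((fun i => esymm (Fin n) ℝ i) '' Set.Icc 1 D) := by
  rw [eahm_eq]
  rw [← algebraMap_eq]
  refine Subalgebra.mul_mem _ (Subalgebra.algebraMap_mem _ r) ?_
  refine Subalgebra.prod_mem _ fun i hi => Subalgebra.pow_mem _ ?_ _
  exact Algebra.subset_adjoin ⟨(i : ℕ) + 1, ⟨Nat.succ_le_succ (Nat.zero_le _), ht i hi⟩, rfl⟩

lemma eahm_deg {n : ℕ} (t : Fin n →₀ ℕ) (r : ℝ) :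
    (esymmAlgHomMonomial (Fin n) t r).totalDegree ≤ ∑ i ∈ t.support, ((i : ℕ) + 1) * t i := by
  rw [eahm_eq]
  refine (totalDegree_mul _ _).trans ?_
  rw [totalDegree_C, zero_add]
  refine (totalDegree_finset_prod _ _).trans (Finset.sum_le_sum fun i _ => ?_)
  refine (totalDegree_pow _ _).trans ?_
  exact (Nat.mul_le_mul_left (t i) tdeg_esymm).trans (le_of_eq (mul_comm _ _))

lemma accumulate_sum {n : ℕ} (t : Fin n → ℕ) :
    ∑ j : Fin n, Fin.accumulate n n t j = ∑ i : Fin n, ((i : ℕ) + 1) * t i := by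
  simp only [Fin.accumulate_apply]
  calc ∑ j : Fin n, ∑ i ∈ Finset.univ.filter (fun i : Fin n => (j : ℕ) ≤ (i : ℕ)), t i
      = ∑ j : Fin n, ∑ i : Fin n, if (j : ℕ) ≤ (i : ℕ) then t i else 0 :=
        Finset.sum_congr rfl fun j _ => Finset.sum_filter _ _
    _ = ∑ i : Fin n, ∑ j : Fin n, if (j : ℕ) ≤ (i : ℕ) then t i else 0 := Finset.sum_comm
    _ = ∑ i : Fin n, ((i : ℕ) + 1) * t i := by
        refine Finset.sum_congr rfl fun i _ => ?_
        rw [← Finset.sum_filter]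
        have h : (Finset.univ.filter fun j : Fin n => (j : ℕ) ≤ (i : ℕ)) = Finset.Iic i := by
          ext j
          simp only [Finset.mem_filter, Finset.mem_univ, true_and, Finset.mem_Iic, Fin.le_def]
        rw [Finset.sum_const, h, Fin.card_Iic, smul_eq_mul]

lemma symm_mem_adjoin_esymm {n D : ℕ} (p : MvPolynomial (Fin n) ℝ) (hp : p.IsSymmetric)
    (hdeg : p.totalDegree ≤ D) :
    p ∈ Algebra.adjoin ℝ ((fun i => esymm (Fin n) ℝ i) '' Set.Icc 1 D) := by
  set A := Algebra.adjoin ℝ ((fun i => esymm (Fin n) ℝ i) '' Set.Icc 1 D) with hA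
  suffices h : ∀ (u : Lex (Fin n →₀ ℕ)) (p : MvPolynomial (Fin n) ℝ),
      p.supDegree toLex = u → p.IsSymmetric → p.totalDegree ≤ D → p ∈ A from
    h _ p rfl hp hdeg
  intro u
  induction u using WellFoundedLT.induction with
  | _ u ih =>
  intro p hu hp hdeg
  obtain rfl | h0 := eq_or_ne p 0
  · exact Subalgebra.zero_mem _
  subst hu
  set t : Fin n →₀ ℕ :=
    Finsupp.equivFunOnFinite.symm (Fin.invAccumulate n n <| ↑(ofLex <| p.supDegree toLex)) with hts
  have hcoe : ⇑t = Fin.invAccumulate n n ⇑(ofLex <| p.supDegree toLex) := rfl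
  have hacc : Fin.accumulate n n ⇑t = ⇑(ofLex <| p.supDegree toLex) := by
    rw [hcoe]
    exact Fin.accumulate_invAccumulate le_rfl hp.antitone_supDegree
  have hlc : p.leadingCoeff toLex ≠ 0 := by
    rwa [Ne, AddMonoidAlgebra.leadingCoeff_eq_zero toLex.injective]
  -- the support of supDegree as Finsupp is in p.support
  obtain ⟨a, ha, hae⟩ := AddMonoidAlgebra.exists_supDegree_mem_support toLex h0
  have haofLex : ofLex (p.supDegree toLex) = a := by rw [hae]; rfl
  -- degree sum bound
  have hsum : ∑ i : Fin n, ((i : ℕ) + 1) * t i ≤ D := by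
    have h1 : ∑ j : Fin n, (ofLex (p.supDegree toLex)) j ≤ D := by
      refine le_trans ?_ hdeg
      rw [haofLex]
      have := MvPolynomial.le_totalDegree (p := p) (s := a) ha
      rwa [Finsupp.sum_fintype] at this
      intro j; rfl
    calc ∑ i : Fin n, ((i : ℕ) + 1) * t i
        = ∑ j : Fin n, Fin.accumulate n n ⇑t j :=
          (accumulate_sum _).symm
      _ ≤ D := by rw [hacc]; exact h1
  have hmemt : ∀ i ∈ t.support, (i : ℕ) + 1 ≤ D := by
    intro i hi
    have h1 : 1 ≤ t i := Nat.one_le_iff_ne_zero.mpr (Finsupp.mem_support_iff.mp hi)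
    calc (i : ℕ) + 1 ≤ ((i : ℕ) + 1) * t i := Nat.le_mul_of_pos_right _ h1
      _ ≤ ∑ i : Fin n, ((i : ℕ) + 1) * t i :=
          Finset.single_le_sum (f := fun i : Fin n => ((i : ℕ) + 1) * t i)
            (fun j _ => Nat.zero_le _) (Finset.mem_univ i)
      _ ≤ D := hsum
  set E := esymmAlgHomMonomial (Fin n) t (p.leadingCoeff toLex) with hE
  have hEmem : E ∈ A := eahm_mem t _ hmemt
  have hd : E.supDegree toLex = p.supDegree toLex := by
    rw [← ofLex_inj, DFunLike.ext'_iff, hE, supDegree_esymmAlgHomMonomial hlc t le_rfl]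
    exact hacc
  obtain he | hne := eq_or_ne p E
  · rw [he]; exact hEmem
  have hlt := (AddMonoidAlgebra.supDegree_sub_lt_of_leadingCoeff_eq toLex.injective hd.symm ?_
    ).resolve_right hne
  · have hsym : (p - E).IsSymmetric := hp.sub (isSymmetric_esymmAlgHomMonomial _ _)
    have hdegE : E.totalDegree ≤ D := le_trans (eahm_deg t _) (le_trans (Finset.sum_le_sum_of_subset
      (Finset.subset_univ _)) hsum)
    have hdeg2 : (p - E).totalDegree ≤ D := by
      rw [sub_eq_add_neg]
      refine le_trans (MvPolynomial.totalDegree_add _ _) (max_le hdeg ?_)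
      rwa [MvPolynomial.totalDegree_neg]
    have := ih _ hlt (p - E) rfl hsym hdeg2
    have : (p - E) + E ∈ A := Subalgebra.add_mem _ this hEmem
    rwa [sub_add_cancel] at this
  · rw [hE, leadingCoeff_esymmAlgHomMonomial t le_rfl]

lemma esymm_mem_adjoin_psum {n D : ℕ} (k : ℕ) (hk : k ≤ D) :
    esymm (Fin n) ℝ k ∈ Algebra.adjoin ℝ ((fun i => psum (Fin n) ℝ i) '' Set.Icc 1 D) := by
  set A := Algebra.adjoin ℝ ((fun i => psum (Fin n) ℝ i) '' Set.Icc 1 D) with hA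
  induction k using Nat.strong_induction_on with
  | _ k ih =>
  rcases Nat.eq_zero_or_pos k with rfl | hk0
  · rw [esymm_zero]; exact Subalgebra.one_mem _
  have hnewton := psum_eq_mul_esymm_sub_sum (Fin n) ℝ k hk0
  set S := ∑ a ∈ Finset.HasAntidiagonal.antidiagonal k with a.1 ∈ Set.Ioo 0 k,
      (-1 : MvPolynomial (Fin n) ℝ) ^ a.1 * esymm (Fin n) ℝ a.1 * psum (Fin n) ℝ a.2 with hS
  have h2 : psum (Fin n) ℝ k + S = C ((-1 : ℝ) ^ (k + 1) * (k : ℝ)) * esymm (Fin n) ℝ k := by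
    rw [hnewton]
    have : ((-1 : MvPolynomial (Fin n) ℝ)) ^ (k + 1) * (k : MvPolynomial (Fin n) ℝ)
        = C ((-1 : ℝ) ^ (k + 1) * (k : ℝ)) := by
      rw [map_mul, map_pow, map_neg, map_one, map_natCast]
    rw [← this]; ring
  have hc : C (((-1 : ℝ) ^ (k + 1) * (k : ℝ))⁻¹) * C ((-1 : ℝ) ^ (k + 1) * (k : ℝ))
      = (1 : MvPolynomial (Fin n) ℝ) := by
    rw [← map_mul, inv_mul_cancel₀, map_one]
    apply mul_ne_zero
    · positivity
    · exact_mod_cast hk0.ne'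
  have h3 : esymm (Fin n) ℝ k
      = C (((-1 : ℝ) ^ (k + 1) * (k : ℝ))⁻¹) * (psum (Fin n) ℝ k + S) := by
    rw [h2, ← mul_assoc, hc, one_mul]
  rw [h3, ← algebraMap_eq]
  refine Subalgebra.mul_mem _ (Subalgebra.algebraMap_mem _ _) (Subalgebra.add_mem _ ?_ ?_)
  · exact Algebra.subset_adjoin ⟨k, ⟨hk0, hk⟩, rfl⟩
  · refine Subalgebra.sum_mem _ fun a ha => ?_
    rw [Finset.mem_filter, Finset.HasAntidiagonal.mem_antidiagonal] at ha
    have hak := ha.1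
    have ha1 : 0 < a.1 := ha.2.1
    have ha2 : a.1 < k := ha.2.2
    refine Subalgebra.mul_mem _ (Subalgebra.mul_mem _ ?_ ?_) ?_
    · exact Subalgebra.pow_mem _ (Subalgebra.neg_mem _ (Subalgebra.one_mem _)) _
    · exact ih a.1 ha2 (le_trans (le_of_lt ha2) hk)
    · refine Algebra.subset_adjoin ⟨a.2, ⟨?_, ?_⟩, rfl⟩ <;> omega

lemma eval_eq_of_psum_eq {n d : ℕ} (F : MvPolynomial (Fin n) ℝ) (hF : F.IsSymmetric)
    (hdeg : F.totalDegree ≤ d) (y z : Fin n → ℝ)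
    (h : ∀ i, 1 ≤ i → i ≤ d → ∑ j, y j ^ i = ∑ j, z j ^ i) :
    MvPolynomial.eval y F = MvPolynomial.eval z F := by
  have h1 := symm_mem_adjoin_esymm F hF hdeg
  have h2 : F ∈ Algebra.adjoin ℝ ((fun i => psum (Fin n) ℝ i) '' Set.Icc 1 d) := by
    refine Algebra.adjoin_le ?_ h1
    rintro q ⟨i, ⟨hi1, hi2⟩, rfl⟩
    exact esymm_mem_adjoin_psum i hi2
  clear h1 hF hdeg
  induction h2 using Algebra.adjoin_induction with
  | mem q hq =>
    obtain ⟨i, ⟨hi1, hi2⟩, rfl⟩ := hq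
    simp only [psum, map_sum, map_pow, eval_X]
    exact h i hi1 hi2
  | algebraMap r => simp
  | add a b ha hb hA hB => rw [map_add, map_add, hA, hB]
  | mul a b ha hb hA hB => rw [map_mul, map_mul, hA, hB]

lemma hasStrictFDerivAt_psum {n : ℕ} (k : ℕ) (a : Fin n → ℝ) :
    HasStrictFDerivAt (fun y : Fin n → ℝ => ∑ j, y j ^ k)
      (∑ j : Fin n, ((k : ℝ) * a j ^ (k - 1)) •
        (ContinuousLinearMap.proj j : (Fin n → ℝ) →L[ℝ] ℝ)) a := by
  apply HasStrictFDerivAt.fun_sum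
  intro j _
  have h1 : HasStrictFDerivAt (fun y : Fin n → ℝ => y j)
      (ContinuousLinearMap.proj j : (Fin n → ℝ) →L[ℝ] ℝ) a :=
    (ContinuousLinearMap.proj (R := ℝ) (φ := fun _ : Fin n => ℝ) j).hasStrictFDerivAt
  exact (hasStrictDerivAt_pow k (a j)).comp_hasStrictFDerivAt a h1

lemma exists_small_fiber {n d : ℕ} (hd : 2 ≤ d) (x : Fin n → ℝ) :
    ∃ y : Fin n → ℝ, (Finset.univ.image y).card ≤ d ∧
      ∀ i : Fin d, ∑ j, y j ^ ((i : ℕ) + 1) = ∑ j, x j ^ ((i : ℕ) + 1) := by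
  classical
  set f : Fin d → (Fin n → ℝ) → ℝ := fun i y => ∑ j, y j ^ ((i : ℕ) + 1) with hf
  set K : Set (Fin n → ℝ) := {y | ∀ i, f i y = f i x} with hK
  have hfc : ∀ i, Continuous (f i) := fun i => by
    simp only [hf]; fun_prop
  have hKc : IsClosed K := by
    have : K = ⋂ i, (f i) ⁻¹' {f i x} := by
      ext z; simp [hK, Set.mem_iInter]
    rw [this]
    exact isClosed_iInter fun i => IsClosed.preimage (hfc i) isClosed_singleton
  set i1 : Fin d := ⟨1, by omega⟩ with hi1
  have hKb : Bornology.IsBounded K := by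
    refine (Metric.isBounded_closedBall (x := (0 : Fin n → ℝ))
      (r := Real.sqrt (f i1 x))).subset ?_
    intro y hy
    rw [Metric.mem_closedBall, dist_zero_right]
    rw [pi_norm_le_iff_of_nonneg (Real.sqrt_nonneg _)]
    intro j
    rw [Real.norm_eq_abs, ← Real.sqrt_sq_eq_abs]
    apply Real.sqrt_le_sqrt
    rw [← hy i1]
    have hfy : f i1 y = ∑ j', y j' ^ 2 := rfl
    rw [hfy]
    exact Finset.single_le_sum (f := fun j' => y j' ^ 2)
      (fun j' _ => sq_nonneg _) (Finset.mem_univ j)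
  have hcomp : IsCompact K := Metric.isCompact_of_isClosed_isBounded hKc hKb
  set g : (Fin n → ℝ) → ℝ := fun y => ∑ j, y j ^ (d + 1) with hg
  have hgc : Continuous g := by simp only [hg]; fun_prop
  obtain ⟨y₀, hy₀K, hmin⟩ := hcomp.exists_isMinOn ⟨x, fun i => rfl⟩ hgc.continuousOn
  have hextr : IsLocalExtrOn g {y | ∀ i, f i y = f i y₀} y₀ := by
    have hKe : {y | ∀ i, f i y = f i y₀} = K := by
      ext z
      constructor <;> intro hz i
      · rw [hz i, hy₀K i]
      · rw [hz i, ← hy₀K i]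
    rw [hKe]
    exact hmin.localize.isExtr
  obtain ⟨Λ, Λ₀, hne, hsum⟩ := hextr.exists_multipliers_of_hasStrictFDerivAt
    (f' := fun i : Fin d => ∑ j : Fin n, ((((i : ℕ) + 1 : ℕ) : ℝ) * y₀ j ^ (i : ℕ)) •
      (ContinuousLinearMap.proj j : (Fin n → ℝ) →L[ℝ] ℝ))
    (φ' := ∑ j : Fin n, (((d + 1 : ℕ) : ℝ) * y₀ j ^ d) •
      (ContinuousLinearMap.proj j : (Fin n → ℝ) →L[ℝ] ℝ))
    (fun i => hasStrictFDerivAt_psum ((i : ℕ) + 1) y₀)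
    (hasStrictFDerivAt_psum (d + 1) y₀)
  have hkey : ∀ j : Fin n,
      (∑ i : Fin d, Λ i * (((i : ℕ) + 1 : ℕ) : ℝ) * y₀ j ^ (i : ℕ))
        + Λ₀ * ((d + 1 : ℕ) : ℝ) * y₀ j ^ d = 0 := by
    intro j
    have h1 := congrFun (congrArg DFunLike.coe hsum) (Pi.single j 1)
    simp only [ContinuousLinearMap.add_apply, ContinuousLinearMap.coe_sum',
      Finset.sum_apply, ContinuousLinearMap.coe_smul', Pi.smul_apply,
      ContinuousLinearMap.proj_apply, ContinuousLinearMap.zero_apply,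
      smul_eq_mul] at h1
    have hsing : ∀ (c : Fin n → ℝ), ∑ j' : Fin n, c j' * (Pi.single j 1 : Fin n → ℝ) j' = c j := by
      intro c
      rw [Finset.sum_eq_single j]
      · rw [Pi.single_eq_same, mul_one]
      · intro b _ hb
        rw [Pi.single_eq_of_ne hb, mul_zero]
      · intro hj; exact absurd (Finset.mem_univ j) hj
    simp only [hsing] at h1
    have hc : ∀ i : Fin d, Λ i * ((((i : ℕ) + 1 : ℕ) : ℝ) * y₀ j ^ (i : ℕ))
        = Λ i * (((i : ℕ) + 1 : ℕ) : ℝ) * y₀ j ^ (i : ℕ) := fun i => by ring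
    rw [Finset.sum_congr rfl fun i _ => hc i, ← mul_assoc] at h1
    exact h1
  set q : Polynomial ℝ := Polynomial.C (Λ₀ * ((d + 1 : ℕ) : ℝ)) * Polynomial.X ^ d
      + ∑ i : Fin d, Polynomial.C (Λ i * (((i : ℕ) + 1 : ℕ) : ℝ)) * Polynomial.X ^ (i : ℕ)
    with hq
  have hroot : ∀ j, q.IsRoot (y₀ j) := by
    intro j
    have hk := hkey j
    simp only [hq, Polynomial.IsRoot, Polynomial.eval_add, Polynomial.eval_mul,
      Polynomial.eval_pow, Polynomial.eval_C, Polynomial.eval_X, Polynomial.eval_finset_sum]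
    rw [add_comm]
    exact hk
  have hq0 : q ≠ 0 := by
    intro hq0
    by_cases hΛ₀ : Λ₀ = 0
    · have hΛ : Λ ≠ 0 := by
        intro h; exact hne (by rw [h, hΛ₀]; rfl)
      obtain ⟨i, hi⟩ := Function.ne_iff.mp hΛ
      have hco : q.coeff (i : ℕ) = Λ i * (((i : ℕ) + 1 : ℕ) : ℝ) := by
        rw [hq]
        rw [Polynomial.coeff_add, Polynomial.coeff_C_mul, Polynomial.coeff_X_pow,
          Polynomial.finset_sum_coeff]
        have hid : ¬ ((i : ℕ) = d) := fun h => by have := i.2; omega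
        rw [if_neg hid, mul_zero, zero_add]
        rw [Finset.sum_eq_single i]
        · rw [Polynomial.coeff_C_mul, Polynomial.coeff_X_pow, if_pos rfl, mul_one]
        · intro b _ hb
          rw [Polynomial.coeff_C_mul, Polynomial.coeff_X_pow,
            if_neg (fun h => hb (Fin.val_injective h.symm)), mul_zero]
        · intro h; exact absurd (Finset.mem_univ i) h
      rw [hq0, Polynomial.coeff_zero] at hco
      have : Λ i = 0 := by
        have hpos : (0 : ℝ) < (((i : ℕ) + 1 : ℕ) : ℝ) := by positivity
        rcases mul_eq_zero.mp hco.symm with h | h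
        · exact h
        · exact absurd h hpos.ne'
      exact hi this
    · have hco : q.coeff d = Λ₀ * ((d + 1 : ℕ) : ℝ) := by
        rw [hq]
        rw [Polynomial.coeff_add, Polynomial.coeff_C_mul, Polynomial.coeff_X_pow, if_pos rfl,
          mul_one, Polynomial.finset_sum_coeff]
        have : ∀ i : Fin d, (Polynomial.C (Λ i * (((i : ℕ) + 1 : ℕ) : ℝ))
            * Polynomial.X ^ (i : ℕ)).coeff d = 0 := by
          intro i
          rw [Polynomial.coeff_C_mul, Polynomial.coeff_X_pow,
            if_neg (fun h => by have := i.2; omega), mul_zero]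
        rw [Finset.sum_congr rfl fun i _ => this i, Finset.sum_const_zero, add_zero]
      rw [hq0, Polynomial.coeff_zero] at hco
      have hpos : (0 : ℝ) < ((d + 1 : ℕ) : ℝ) := by positivity
      rcases mul_eq_zero.mp hco.symm with h | h
      · exact hΛ₀ h
      · exact absurd h hpos.ne'
  have hqdeg : q.natDegree ≤ d := by
    rw [hq]
    refine le_trans (Polynomial.natDegree_add_le _ _) (max_le ?_ ?_)
    · exact le_trans (Polynomial.natDegree_C_mul_le _ _) (by simp)
    · refine Polynomial.natDegree_sum_le_of_forall_le _ _ fun i _ => ?_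
      refine le_trans (Polynomial.natDegree_C_mul_le _ _) ?_
      rw [Polynomial.natDegree_X_pow]
      exact le_of_lt i.2
  refine ⟨y₀, ?_, fun i => hy₀K i⟩
  have hsub : Finset.univ.image y₀ ⊆ q.roots.toFinset := by
    intro v hv
    obtain ⟨j, _, rfl⟩ := Finset.mem_image.mp hv
    rw [Multiset.mem_toFinset, Polynomial.mem_roots hq0]
    exact hroot j
  calc (Finset.univ.image y₀).card ≤ q.roots.toFinset.card := Finset.card_le_card hsub
    _ ≤ Multiset.card q.roots := q.roots.toFinset_card_le
    _ ≤ q.natDegree := Polynomial.card_roots' q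
    _ ≤ d := hqdeg

/-- **Degree principle.** A symmetric real polynomial `F` of total degree `d ≥ 1` in `n`
variables has a real zero iff it has a real zero with at most `d` distinct coordinates. -/
theorem degree_principle (n d : ℕ) (hn : 1 ≤ n) (hd : 1 ≤ d)
    (F : MvPolynomial (Fin n) ℝ) (hF : MvPolynomial.IsSymmetric F)
    (hdeg : F.totalDegree = d) :
    (∃ x : Fin n → ℝ, MvPolynomial.eval x F = 0) ↔
      (∃ y : Fin n → ℝ, (Finset.univ.image y).card ≤ d ∧ MvPolynomial.eval y F = 0) := by
  constructor
  · rintro ⟨x, hx⟩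
    rcases eq_or_lt_of_le hd with hd1 | hd2
    · -- d = 1
      set c : ℝ := (∑ j, x j) / n with hc
      have hne : Nonempty (Fin n) := Fin.pos_iff_nonempty.mp hn
      refine ⟨fun _ => c, ?_, ?_⟩
      · rw [Finset.image_const Finset.univ_nonempty c, Finset.card_singleton]
        exact hd
      · rw [← hx]
        apply eval_eq_of_psum_eq F hF (le_of_eq hdeg)
        intro i h1 h2
        have hi : i = 1 := by omega
        subst hi
        simp only [pow_one, Finset.sum_const, Finset.card_univ, Fintype.card_fin, smul_eq_mul]
        rw [nsmul_eq_mul, mul_div_cancel₀]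
        exact_mod_cast Nat.pos_of_ne_zero (by omega) |>.ne'
    · -- 2 ≤ d
      obtain ⟨y, hcard, hpow⟩ := exists_small_fiber hd2 x
      refine ⟨y, hcard, ?_⟩
      rw [← hx]
      apply eval_eq_of_psum_eq F hF (le_of_eq hdeg)
      intro i h1 h2
      have h3 := hpow ⟨i - 1, by omega⟩
      have h4 : i - 1 + 1 = i := by omega
      rw [show ((⟨i - 1, by omega⟩ : Fin d) : ℕ) = i - 1 from rfl, h4] at h3
      exact h3
  · rintro ⟨y, _, hy⟩
    exact ⟨y, hy⟩
end

section
/- Half degree principle on the nonnegative orthant: Let n ≥ 1 and let F ∈ ℝ[x_1,…,x_n] be a symmetric polynomial of (total) degree d ≥ 1, and set k := max{2, ⌊d/2⌋}. Then F(x) ≥ 0 for all x ∈ ℝⁿ with all coordinates nonnegative if and only if F(y) ≥ 0 for all y ∈ ℝⁿ with all coordinates nonnegative whose nonzero coordinates take at most k distinct values. -/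
set_option maxHeartbeats 1600000

namespace HDP

section PolyPart
open Polynomial Finset



lemma card_filter_le_val (m c : ℕ) :
    ((Finset.univ : Finset (Fin m)).filter fun j => c ≤ j.1).card = m - c := by
  rcases lt_or_ge c m with h | h
  · have he : ((Finset.univ : Finset (Fin m)).filter fun j => c ≤ j.1)
        = Finset.Ici (⟨c, h⟩ : Fin m) := by
      ext j
      simp [Fin.le_def]
    rw [he, Fin.card_Ici]
  · have he : ((Finset.univ : Finset (Fin m)).filter fun j => c ≤ j.1) = ∅ := by
      ext j
      simp only [Finset.mem_filter, Finset.mem_univ, true_and, Finset.notMem_empty, iff_false]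
      have := j.2
      omega
    rw [he]
    simp
    omega

lemma sign_eval {m : ℕ} (t : Fin m → ℝ) (y : ℝ) (c : ℕ)
    (h1 : ∀ j : Fin m, j.1 < c → t j < y) (h2 : ∀ j : Fin m, c ≤ j.1 → y < t j) :
    0 < (-1 : ℝ) ^ (m - c) * ∏ j, (y - t j) := by
  classical
  rw [← Finset.prod_filter_mul_prod_filter_not Finset.univ (fun j : Fin m => c ≤ j.1)]
  have hcard := card_filter_le_val m c
  have hprod : (-1 : ℝ) ^ (m - c) * ((∏ j ∈ Finset.univ.filter fun j : Fin m => c ≤ j.1,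
        (y - t j)) * ∏ j ∈ Finset.univ.filter fun j : Fin m => ¬ c ≤ j.1, (y - t j))
      = (∏ j ∈ Finset.univ.filter fun j : Fin m => c ≤ j.1, (t j - y))
        * ∏ j ∈ Finset.univ.filter fun j : Fin m => ¬ c ≤ j.1, (y - t j) := by
    rw [← hcard]
    rw [show (∏ j ∈ Finset.univ.filter fun j : Fin m => c ≤ j.1, (t j - y))
        = ∏ j ∈ Finset.univ.filter fun j : Fin m => c ≤ j.1, ((-1) * (y - t j)) by
      refine Finset.prod_congr rfl fun j _ => by ring]
    rw [Finset.prod_mul_distrib, Finset.prod_const]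
    ring
  rw [show ((-1 : ℝ) ^ (m - c) * ((∏ j ∈ Finset.univ.filter fun j : Fin m => c ≤ j.1,
        (y - t j)) * ∏ j ∈ Finset.univ.filter fun j : Fin m => ¬ c ≤ j.1, (y - t j))) =
      ((-1 : ℝ) ^ (m - c) * ((∏ j ∈ Finset.univ.filter fun j : Fin m => c ≤ j.1,
        (y - t j)) * ∏ j ∈ Finset.univ.filter fun j : Fin m => ¬ c ≤ j.1, (y - t j))) from rfl]
  rw [hprod]
  apply mul_pos
  · exact Finset.prod_pos fun j hj => sub_pos.2 (h2 j (Finset.mem_filter.1 hj).2)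
  · exact Finset.prod_pos fun j hj => sub_pos.2 (h1 j (by
      have := (Finset.mem_filter.1 hj).2
      omega))




lemma sign_shift {s A δ : ℝ} (hs : s = 1 ∨ s = -1) (hA : 0 < s * A) (hd : |δ| < |A|) :
    0 < s * (A + δ) := by
  have hsA : s * A = |A| := by
    rcases hs with rfl | rfl
    · rw [one_mul] at hA ⊢
      exact (abs_of_pos hA).symm
    · have : A < 0 := by nlinarith
      rw [abs_of_neg this]
      ring
  have habs : |s * δ| ≤ |δ| := by
    rcases hs with rfl | rfl <;> simp
  have h1 : s * (A + δ) = |A| + s * δ := by rw [mul_add, hsA]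
  have h2 := neg_abs_le (s * δ)
  linarith

lemma perturb_roots {m : ℕ} (hm : 1 ≤ m) (t : Fin m → ℝ) (ht : StrictMono t)
    (htpos : ∀ i, 0 < t i) :
    ∃ δ0 : ℝ, 0 < δ0 ∧ ∀ δ : ℝ, |δ| ≤ δ0 → ∃ r : Fin m → ℝ, (∀ i, 0 < r i) ∧
      (∏ i, (X + C (-(r i)))) = (∏ i, (X + C (-(t i)))) + C δ := by
  classical
  set E : Polynomial ℝ := ∏ i, (X + C (-(t i))) with hE
  have hEmonic : E.Monic := monic_prod_of_monic _ _ fun i _ => monic_X_add_C _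
  have hEdeg : E.natDegree = m := by
    rw [hE, natDegree_prod_of_monic _ _ fun i _ => monic_X_add_C _]
    simp [← map_neg, natDegree_X_add_C]
  have hEeval : ∀ y : ℝ, E.eval y = ∏ j, (y - t j) := by
    intro y
    rw [hE, eval_prod]
    exact Finset.prod_congr rfl fun j _ => by simp [sub_eq_add_neg]
  -- the interleaving points
  set lo : Fin m → ℝ := fun i =>
    if h : i.1 = 0 then 0 else (t ⟨i.1 - 1, Nat.lt_of_le_of_lt (Nat.sub_le _ _) i.2⟩ + t i) / 2
    with hlo
  set hi : Fin m → ℝ := fun i =>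
    if h : i.1 + 1 < m then (t i + t ⟨i.1 + 1, h⟩) / 2 else t i + 1 with hhi
  have hlo_lt : ∀ i, lo i < t i := by
    intro i
    rw [hlo]
    dsimp only
    split_ifs with h
    · exact htpos i
    · have : t ⟨i.1 - 1, Nat.lt_of_le_of_lt (Nat.sub_le _ _) i.2⟩ < t i := by
        apply ht
        simp only [Fin.lt_def]
        omega
      linarith
  have hhi_gt : ∀ i, t i < hi i := by
    intro i
    rw [hhi]
    dsimp only
    split_ifs with h
    · have : t i < t ⟨i.1 + 1, h⟩ := by
        apply ht
        simp only [Fin.lt_def]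
        omega
      linarith
    · linarith
  have hlo_below : ∀ i : Fin m, ∀ j : Fin m, j.1 < i.1 → t j < lo i := by
    intro i j hj
    rw [hlo]
    dsimp only
    have hne : ¬ i.1 = 0 := by omega
    rw [dif_neg hne]
    have h1 : t j ≤ t ⟨i.1 - 1, Nat.lt_of_le_of_lt (Nat.sub_le _ _) i.2⟩ := by
      apply ht.monotone
      simp only [Fin.le_def]
      omega
    have h2 : t ⟨i.1 - 1, Nat.lt_of_le_of_lt (Nat.sub_le _ _) i.2⟩ < t i := by
      apply ht
      simp only [Fin.lt_def]
      omega
    linarith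
  have hlo_above : ∀ i : Fin m, ∀ j : Fin m, i.1 ≤ j.1 → lo i < t j := by
    intro i j hj
    have h1 : t i ≤ t j := ht.monotone (by simp only [Fin.le_def]; omega)
    linarith [hlo_lt i]
  have hhi_below : ∀ i : Fin m, ∀ j : Fin m, j.1 < i.1 + 1 → t j < hi i := by
    intro i j hj
    have h1 : t j ≤ t i := ht.monotone (by simp only [Fin.le_def]; omega)
    linarith [hhi_gt i]
  have hhi_above : ∀ i : Fin m, ∀ j : Fin m, i.1 + 1 ≤ j.1 → hi i < t j := by
    intro i j hj
    rw [hhi]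
    dsimp only
    have hlt : i.1 + 1 < m := by
      have := j.2
      omega
    rw [dif_pos hlt]
    have h1 : t ⟨i.1 + 1, hlt⟩ ≤ t j := ht.monotone (by simp only [Fin.le_def]; omega)
    have h2 : t i < t ⟨i.1 + 1, hlt⟩ := ht (by simp only [Fin.lt_def]; omega)
    linarith
  have hlohi : ∀ i, lo i < hi i := fun i => lt_trans (hlo_lt i) (hhi_gt i)
  have hlo_nonneg : ∀ i, 0 ≤ lo i := by
    intro i
    rw [hlo]
    dsimp only
    split_ifs with h
    · exact le_refl 0
    · have h1 := htpos ⟨i.1 - 1, Nat.lt_of_le_of_lt (Nat.sub_le _ _) i.2⟩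
      have h2 := htpos i
      linarith
  -- signs of E at the interleaving points
  have hsignlo : ∀ i : Fin m, 0 < (-1 : ℝ) ^ (m - i.1) * E.eval (lo i) := by
    intro i
    rw [hEeval]
    exact sign_eval t (lo i) i.1 (hlo_below i) (hlo_above i)
  have hsignhi : ∀ i : Fin m, 0 < (-1 : ℝ) ^ (m - (i.1 + 1)) * E.eval (hi i) := by
    intro i
    rw [hEeval]
    exact sign_eval t (hi i) (i.1 + 1) (hhi_below i) (hhi_above i)
  have hElo_ne : ∀ i, E.eval (lo i) ≠ 0 := by
    intro i h0
    have := hsignlo i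
    rw [h0, mul_zero] at this
    exact lt_irrefl _ this
  have hEhi_ne : ∀ i, E.eval (hi i) ≠ 0 := by
    intro i h0
    have := hsignhi i
    rw [h0, mul_zero] at this
    exact lt_irrefl _ this
  have hne : (Finset.univ : Finset (Fin m)).Nonempty := by
    refine ⟨⟨0, hm⟩, Finset.mem_univ _⟩
  set δ0 : ℝ := (Finset.univ.inf' hne fun i => min |E.eval (lo i)| |E.eval (hi i)|) / 2 with hδ0
  have hδ0pos : 0 < δ0 := by
    rw [hδ0]
    have : 0 < Finset.univ.inf' hne fun i => min |E.eval (lo i)| |E.eval (hi i)| := by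
      rw [Finset.lt_inf'_iff]
      intro i _
      exact lt_min (abs_pos.2 (hElo_ne i)) (abs_pos.2 (hEhi_ne i))
    linarith
  refine ⟨δ0, hδ0pos, ?_⟩
  intro δ hδ
  have hδlo : ∀ i, |δ| < |E.eval (lo i)| := by
    intro i
    have h1 : Finset.univ.inf' hne (fun i => min |E.eval (lo i)| |E.eval (hi i)|)
        ≤ min |E.eval (lo i)| |E.eval (hi i)| := Finset.inf'_le _ (Finset.mem_univ i)
    have h2 := min_le_left |E.eval (lo i)| |E.eval (hi i)|
    have h3 : (0:ℝ) < |E.eval (lo i)| := abs_pos.2 (hElo_ne i)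
    rw [hδ0] at hδ
    linarith
  have hδhi : ∀ i, |δ| < |E.eval (hi i)| := by
    intro i
    have h1 : Finset.univ.inf' hne (fun i => min |E.eval (lo i)| |E.eval (hi i)|)
        ≤ min |E.eval (lo i)| |E.eval (hi i)| := Finset.inf'_le _ (Finset.mem_univ i)
    have h2 := min_le_right |E.eval (lo i)| |E.eval (hi i)|
    have h3 : (0:ℝ) < |E.eval (hi i)| := abs_pos.2 (hEhi_ne i)
    rw [hδ0] at hδ
    linarith
  -- find the roots by the intermediate value theorem
  have hroot : ∀ i : Fin m, ∃ x, x ∈ Set.Ioo (lo i) (hi i) ∧ E.eval x + δ = 0 := by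
    intro i
    set s : ℝ := (-1) ^ (m - (i.1 + 1)) with hs
    have hsor : s = 1 ∨ s = -1 := by
      rcases Nat.even_or_odd (m - (i.1 + 1)) with h | h
      · left; rw [hs]; exact h.neg_one_pow
      · right; rw [hs]; exact h.neg_one_pow
    have hmi : m - i.1 = (m - (i.1 + 1)) + 1 := by
      have := i.2
      omega
    have hnegs : (-1 : ℝ) ^ (m - i.1) = -s := by
      rw [hmi, pow_succ, hs]
      ring
    have hposhi : 0 < s * (E.eval (hi i) + δ) :=
      sign_shift hsor (hsignhi i) (hδhi i)
    have hposlo : 0 < (-s) * (E.eval (lo i) + δ) := by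
      refine sign_shift ?_ ?_ (hδlo i)
      · rcases hsor with h1 | h1
        · right; simp [h1]
        · left; simp [h1]
      · rw [← hnegs]
        exact hsignlo i
    have hcont : ContinuousOn (fun y : ℝ => E.eval y + δ) (Set.Icc (lo i) (hi i)) :=
      (Continuous.add (Polynomial.continuous E) continuous_const).continuousOn
    rcases hsor with hs1 | hs1
    · -- s = 1 : eval hi + δ > 0, eval lo + δ < 0 : increasing
      rw [hs1, one_mul] at hposhi
      rw [hs1] at hposlo
      have hlt : E.eval (lo i) + δ < 0 := by nlinarith
      have := intermediate_value_Ioo (le_of_lt (hlohi i)) hcont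
      have h0 : (0:ℝ) ∈ Set.Ioo (E.eval (lo i) + δ) (E.eval (hi i) + δ) := ⟨hlt, hposhi⟩
      obtain ⟨x, hx, hfx⟩ := this h0
      exact ⟨x, hx, hfx⟩
    · -- s = -1 : eval hi + δ < 0, eval lo + δ > 0 : decreasing
      rw [hs1] at hposhi hposlo
      have hlt : E.eval (hi i) + δ < 0 := by nlinarith
      have hgt : 0 < E.eval (lo i) + δ := by nlinarith
      have := intermediate_value_Ioo' (le_of_lt (hlohi i)) hcont
      have h0 : (0:ℝ) ∈ Set.Ioo (E.eval (hi i) + δ) (E.eval (lo i) + δ) := ⟨hlt, hgt⟩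
      obtain ⟨x, hx, hfx⟩ := this h0
      exact ⟨x, hx, hfx⟩
  choose r hrIoo hrroot using hroot
  have hrpos : ∀ i, 0 < r i := fun i => lt_of_le_of_lt (hlo_nonneg i) (hrIoo i).1
  have hhilo : ∀ i j : Fin m, i < j → hi i ≤ lo j := by
    intro i j hij
    have hij' : i.1 < j.1 := hij
    have hjne : ¬ j.1 = 0 := by omega
    have hilt : i.1 + 1 < m := by
      have := j.2
      omega
    rw [hhi, hlo]
    dsimp only
    rw [dif_pos hilt, dif_neg hjne]
    have h1 : t i ≤ t ⟨j.1 - 1, Nat.lt_of_le_of_lt (Nat.sub_le _ _) j.2⟩ :=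
      ht.monotone (by simp only [Fin.le_def]; omega)
    have h2 : t ⟨i.1 + 1, hilt⟩ ≤ t j := ht.monotone (by simp only [Fin.le_def]; omega)
    linarith
  have hrinj : Function.Injective r := by
    intro i j hij
    by_contra hne'
    rcases lt_or_gt_of_ne (Fin.val_ne_of_ne hne') with h | h
    · have h1 : r i < hi i := (hrIoo i).2
      have h2 : lo j < r j := (hrIoo j).1
      have h3 := hhilo i j (by exact h)
      rw [hij] at h1
      linarith
    · have h1 : r j < hi j := (hrIoo j).2
      have h2 : lo i < r i := (hrIoo i).1
      have h3 := hhilo j i (by exact h)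
      rw [hij] at h2
      linarith
  -- the perturbed polynomial
  set q : Polynomial ℝ := E + C δ with hq
  have hqmonic : q.Monic := by
    refine hEmonic.add_of_left ?_
    rw [degree_eq_natDegree hEmonic.ne_zero, hEdeg]
    refine lt_of_le_of_lt degree_C_le ?_
    exact_mod_cast Nat.pos_of_ne_zero (by omega)
  have hqdeg : q.natDegree = m := by rw [hq, natDegree_add_C, hEdeg]
  have hq0 : q ≠ 0 := hqmonic.ne_zero
  have hqroot : ∀ i, q.IsRoot (r i) := by
    intro i
    have := hrroot i
    simp only [Polynomial.IsRoot, hq, eval_add, eval_C]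
    exact this
  set M : Multiset ℝ := Finset.univ.val.map r with hM
  have hMnodup : M.Nodup := Multiset.Nodup.map hrinj Finset.univ.nodup
  have hMcard : Multiset.card M = m := by
    rw [hM, Multiset.card_map]
    simp
  have hle : M ≤ q.roots := by
    rw [Multiset.le_iff_count]
    intro a
    by_cases ha : a ∈ M
    · rw [Multiset.count_eq_one_of_mem hMnodup ha]
      obtain ⟨i, _, rfl⟩ := Multiset.mem_map.1 ha
      rw [Polynomial.count_roots]
      exact (Polynomial.rootMultiplicity_pos hq0).2 (hqroot i)
    · rw [Multiset.count_eq_zero_of_notMem ha]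
      exact Nat.zero_le _
  have hcard_le : Multiset.card q.roots ≤ m := by
    have := q.card_roots'
    rwa [hqdeg] at this
  have hMeq : M = q.roots := Multiset.eq_of_le_of_card_le hle (by rw [hMcard]; exact hcard_le)
  have hsplits : q.Splits := by
    rw [Polynomial.splits_iff_card_roots, ← hMeq, hMcard, hqdeg]
  have hfactor := hsplits.eq_prod_roots_of_monic hqmonic
  refine ⟨r, hrpos, ?_⟩
  have : (∏ i, (X + C (-(r i)))) = (Multiset.map (fun a => X - C a) q.roots).prod := by
    rw [← hMeq, hM, Multiset.map_map]
    rw [Finset.prod_eq_multiset_prod]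
    congr 1
    refine Multiset.map_congr rfl fun i _ => ?_
    simp [sub_eq_add_neg]
  rw [this, ← hfactor, hq]

end PolyPart

section MvPart
open Polynomial Finset MvPolynomial



variable {n : ℕ}

/-- the full Vieta vector of elementary symmetric values -/
noncomputable def psi (n : ℕ) (x : Fin n → ℝ) : Fin n → ℝ :=
  fun i => MvPolynomial.eval x (MvPolynomial.esymm (Fin n) ℝ (i.1 + 1))

/-- the monic polynomial with roots `x i` -/
noncomputable def P (x : Fin n → ℝ) : Polynomial ℝ :=
  ∏ i : Fin n, (Polynomial.X + Polynomial.C (-(x i)))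

lemma eval_esymm (x : Fin n → ℝ) (l : ℕ) :
    MvPolynomial.eval x (MvPolynomial.esymm (Fin n) ℝ l)
      = ∑ t ∈ Finset.univ.powersetCard l, ∏ i ∈ t, x i := by
  simp [MvPolynomial.esymm, map_sum]

lemma coeff_P (x : Fin n → ℝ) {l : ℕ} (hl : l ≤ n) :
    (P x).coeff (n - l) = (-1) ^ l * MvPolynomial.eval x (MvPolynomial.esymm (Fin n) ℝ l) := by
  have hcard : n - l ≤ (Finset.univ : Finset (Fin n)).card := by simp [Nat.sub_le]
  have := Finset.prod_X_add_C_coeff (Finset.univ : Finset (Fin n)) (fun i => -(x i)) hcard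
  rw [P]
  rw [this]
  have hnl : (Finset.univ : Finset (Fin n)).card - (n - l) = l := by
    simp [Nat.sub_sub_self hl]
  rw [hnl, eval_esymm, Finset.mul_sum]
  refine Finset.sum_congr rfl fun t ht => ?_
  have htc : t.card = l := (Finset.mem_powersetCard.1 ht).2
  calc ∏ i ∈ t, -x i = ∏ i ∈ t, (-1) * x i := by simp
    _ = (∏ _i ∈ t, (-1:ℝ)) * ∏ i ∈ t, x i := Finset.prod_mul_distrib
    _ = (-1) ^ l * ∏ i ∈ t, x i := by rw [Finset.prod_const, htc]




variable {n : ℕ}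

lemma eval_aeval (x : Fin n → ℝ) (es : Fin n → MvPolynomial (Fin n) ℝ)
    (G : MvPolynomial (Fin n) ℝ) :
    MvPolynomial.eval x (MvPolynomial.aeval es G)
      = MvPolynomial.eval (fun i => MvPolynomial.eval x (es i)) G := by
  have h1 : MvPolynomial.aeval x (MvPolynomial.aeval es G)
      = MvPolynomial.aeval (fun i => MvPolynomial.aeval x (es i)) G := by
    rw [← MvPolynomial.comp_aeval]; rfl
  have h2 : ∀ (y : Fin n → ℝ) (p : MvPolynomial (Fin n) ℝ),
      MvPolynomial.aeval y p = MvPolynomial.eval y p := by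
    intro y p
    rw [← MvPolynomial.coe_aeval_eq_eval]; rfl
  have h3 : (fun i => MvPolynomial.aeval x (es i)) = fun i => MvPolynomial.eval x (es i) :=
    funext fun i => h2 _ _
  rw [← h2 x (MvPolynomial.aeval es G), h1, h3, h2]

lemma esymm_isHomogeneous (l : ℕ) :
    (MvPolynomial.esymm (Fin n) ℝ l).IsHomogeneous l := by
  rw [MvPolynomial.esymm]
  refine MvPolynomial.IsHomogeneous.sum _ _ _ (fun t ht => ?_)
  have := MvPolynomial.IsHomogeneous.prod t (fun i => (MvPolynomial.X i : MvPolynomial (Fin n) ℝ)) (fun _ => 1)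
    (fun i _ => MvPolynomial.isHomogeneous_X _ _)
  have hc : ∑ i ∈ t, 1 = l := by
    simp [(Finset.mem_powersetCard.1 ht).2]
  rwa [hc] at this

/-- weight function: variable `i` stands for `esymm (i+1)`, of degree `i+1`. -/
def wt (n : ℕ) : Fin n → ℕ := fun i => i.1 + 1

lemma aeval_esymm_isHomogeneous {G : MvPolynomial (Fin n) ℝ} {j : ℕ}
    (hG : MvPolynomial.IsWeightedHomogeneous (wt n) G j) :
    (MvPolynomial.aeval (fun i : Fin n => MvPolynomial.esymm (Fin n) ℝ (i.1 + 1)) G).IsHomogeneous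
      j := by
  conv_lhs => rw [G.as_sum]
  rw [map_sum]
  refine MvPolynomial.IsHomogeneous.sum _ _ _ (fun t ht => ?_)
  rw [MvPolynomial.aeval_monomial]
  have hw : (Finsupp.weight (wt n)) t = j := hG (MvPolynomial.mem_support_iff.1 ht)
  have hprod : (t.prod fun i e =>
      (MvPolynomial.esymm (Fin n) ℝ (i.1 + 1)) ^ e).IsHomogeneous j := by
    rw [Finsupp.prod]
    have := MvPolynomial.IsHomogeneous.prod t.support
      (fun i => (MvPolynomial.esymm (Fin n) ℝ (i.1 + 1)) ^ (t i))
      (fun i => (i.1 + 1) * t i)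
      (fun i _ => (esymm_isHomogeneous (i.1+1)).pow (t i))
    have hs : ∑ i ∈ t.support, (i.1 + 1) * t i = j := by
      rw [← hw, Finsupp.weight_apply, Finsupp.sum]
      exact Finset.sum_congr rfl fun i _ => by simp [wt, mul_comm]
    rwa [hs] at this
  have := hprod.C_mul ((algebraMap ℝ ℝ) (MvPolynomial.coeff t G))
  simpa [MvPolynomial.algebraMap_eq] using this




variable {n : ℕ}


lemma exists_G (F : MvPolynomial (Fin n) ℝ) (hF : F.IsSymmetric) {d : ℕ}
    (hdeg : F.totalDegree ≤ d) :
    ∃ G : MvPolynomial (Fin n) ℝ,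
      (∀ x : Fin n → ℝ, MvPolynomial.eval x F = MvPolynomial.eval (psi n x) G) ∧
      (∀ t ∈ G.support, (Finsupp.weight (wt n)) t ≤ d) := by
  classical
  obtain ⟨G, hG⟩ := (MvPolynomial.esymmAlgHom_fin_bijective ℝ n).2 ⟨F, hF⟩
  have hFG : F = MvPolynomial.aeval
      (fun i : Fin n => MvPolynomial.esymm (Fin n) ℝ (i + 1)) G := by
    rw [← MvPolynomial.esymmAlgHom_apply, hG]
  refine ⟨G, ?_, ?_⟩
  · intro x
    rw [hFG, eval_aeval]
    rfl
  · intro t ht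
    by_contra hgt
    push_neg at hgt
    set j := (Finsupp.weight (wt n)) t with hj
    -- the weighted homogeneous component of weight j is nonzero
    have hGj : MvPolynomial.weightedHomogeneousComponent (wt n) j G ≠ 0 := by
      intro h0
      have := MvPolynomial.coeff_weightedHomogeneousComponent (w := wt n) j G t
      rw [h0, if_pos rfl] at this
      simp only [MvPolynomial.coeff_zero] at this
      exact (MvPolynomial.mem_support_iff.1 ht) this.symm
    -- its image under aeval esymm
    set es : Fin n → MvPolynomial (Fin n) ℝ :=
      fun i => MvPolynomial.esymm (Fin n) ℝ (i.1 + 1) with hes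
    set Q : ℕ → MvPolynomial (Fin n) ℝ :=
      fun j' => MvPolynomial.aeval es (MvPolynomial.weightedHomogeneousComponent (wt n) j' G)
      with hQ
    have hQhom : ∀ j', (Q j').IsHomogeneous j' := fun j' =>
      aeval_esymm_isHomogeneous
        (MvPolynomial.weightedHomogeneousComponent_isWeightedHomogeneous (w := wt n) (n := j') (φ := G))
    -- finiteness of the components
    have hfin : (Function.support fun m => MvPolynomial.weightedHomogeneousComponent (wt n) m G).Finite := MvPolynomial.weightedHomogeneousComponent_finsupp (w := wt n) (φ := G)
    set S : Finset ℕ := hfin.toFinset with hS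
    have hjS : j ∈ S := by
      rw [hS, Set.Finite.mem_toFinset]
      exact hGj
    have hsum : ∑ j' ∈ S, MvPolynomial.weightedHomogeneousComponent (wt n) j' G = G := by
      rw [← finsum_eq_sum _ hfin]
      exact MvPolynomial.sum_weightedHomogeneousComponent (wt n) G
    have hFsum : F = ∑ j' ∈ S, Q j' := by
      rw [hFG, ← hsum, map_sum]
    -- homogeneous component of degree j of F
    have hcomp : MvPolynomial.homogeneousComponent j F = Q j := by
      rw [hFsum, map_sum]
      rw [Finset.sum_eq_single j]
      · have := MvPolynomial.homogeneousComponent_of_mem (m := j) (hQhom j)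
        rw [if_pos rfl] at this
        exact this
      · intro j' _ hne
        have := MvPolynomial.homogeneousComponent_of_mem (m := j) (hQhom j')
        rwa [if_neg hne.symm] at this
      · intro hjs
        exact absurd hjS hjs
    have hzero : MvPolynomial.homogeneousComponent j F = 0 :=
      MvPolynomial.homogeneousComponent_eq_zero _ _ (lt_of_le_of_lt hdeg hgt)
    have hQj0 : Q j = 0 := by rw [← hcomp, hzero]
    -- injectivity
    have hinj := MvPolynomial.esymmAlgHom_fin_injective (n := n) (m := n) ℝ le_rfl
    have : MvPolynomial.esymmAlgHom (Fin n) ℝ n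
        (MvPolynomial.weightedHomogeneousComponent (wt n) j G) = 0 := by
      apply Subtype.ext
      rw [MvPolynomial.esymmAlgHom_apply]
      exact hQj0
    have := hinj (a₂ := 0) (by rw [this, map_zero])
    exact hGj this




variable {n : ℕ}

lemma midpoint_eval (G : MvPolynomial (Fin n) ℝ) {k : ℕ}
    (hsupp : ∀ t ∈ G.support,
      (∑ i ∈ Finset.univ.filter (fun i : Fin n => k ≤ i.1), t i) ≤ 1)
    (v w : Fin n → ℝ) (hw : ∀ i : Fin n, i.1 < k → w i = 0) :
    MvPolynomial.eval (v + w) G + MvPolynomial.eval (v - w) G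
      = 2 * MvPolynomial.eval v G := by
  classical
  rw [MvPolynomial.eval_eq, MvPolynomial.eval_eq, MvPolynomial.eval_eq, Finset.mul_sum,
    ← Finset.sum_add_distrib]
  refine Finset.sum_congr rfl fun t ht => ?_
  have key : (∏ i ∈ t.support, (v + w) i ^ t i) + (∏ i ∈ t.support, (v - w) i ^ t i)
      = 2 * ∏ i ∈ t.support, v i ^ t i := by
    set Hs := t.support.filter (fun i : Fin n => k ≤ i.1) with hHs
    set L := t.support.filter (fun i : Fin n => ¬ k ≤ i.1) with hL
    have hsplit : ∀ u : Fin n → ℝ,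
        (∏ i ∈ t.support, u i ^ t i)
          = (∏ i ∈ Hs, u i ^ t i) * ∏ i ∈ L, u i ^ t i := by
      intro u
      rw [hHs, hL, Finset.prod_filter_mul_prod_filter_not]
    have hLv : ∀ i ∈ L, (v + w) i ^ t i = v i ^ t i ∧ (v - w) i ^ t i = v i ^ t i := by
      intro i hi
      have hik : ¬ k ≤ i.1 := (Finset.mem_filter.1 hi).2
      have hwi : w i = 0 := hw i (lt_of_not_ge hik)
      constructor <;> simp [hwi]
    have hLp : (∏ i ∈ L, (v + w) i ^ t i) = ∏ i ∈ L, v i ^ t i :=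
      Finset.prod_congr rfl fun i hi => (hLv i hi).1
    have hLm : (∏ i ∈ L, (v - w) i ^ t i) = ∏ i ∈ L, v i ^ t i :=
      Finset.prod_congr rfl fun i hi => (hLv i hi).2
    have hsum1 : (∑ i ∈ Hs, t i) ≤ 1 := by
      refine le_trans (Finset.sum_le_sum_of_subset ?_) (hsupp t ht)
      intro i hi
      rw [Finset.mem_filter] at hi ⊢
      exact ⟨Finset.mem_univ _, hi.2⟩
    rw [hsplit, hsplit, hsplit, hLp, hLm, ← add_mul]
    rcases Finset.eq_empty_or_nonempty Hs with hemp | ⟨i0, hi0⟩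
    · rw [hemp]
      simp only [Finset.prod_empty]
      ring
    · have hHseq : Hs = {i0} := by
        refine Finset.eq_singleton_iff_unique_mem.2 ⟨hi0, fun j hj => ?_⟩
        by_contra hne
        have h2 : 2 ≤ ∑ i ∈ Hs, t i := by
          have hsub : {j, i0} ⊆ Hs := by
            intro a ha
            rcases Finset.mem_insert.1 ha with rfl | ha
            · exact hj
            · rwa [Finset.mem_singleton.1 ha]
          have : ∑ i ∈ ({j, i0} : Finset (Fin n)), t i ≤ ∑ i ∈ Hs, t i :=
            Finset.sum_le_sum_of_subset hsub
          rw [Finset.sum_pair hne] at this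
          have hj1 : 1 ≤ t j := Nat.one_le_iff_ne_zero.2
            (Finsupp.mem_support_iff.1 (Finset.mem_filter.1 hj).1)
          have hi01 : 1 ≤ t i0 := Nat.one_le_iff_ne_zero.2
            (Finsupp.mem_support_iff.1 (Finset.mem_filter.1 hi0).1)
          omega
        omega
      have hti0 : t i0 = 1 := by
        have h1 : 1 ≤ t i0 := Nat.one_le_iff_ne_zero.2
          (Finsupp.mem_support_iff.1 (Finset.mem_filter.1 hi0).1)
        have : ∑ i ∈ Hs, t i = t i0 := by rw [hHseq, Finset.sum_singleton]
        omega
      rw [hHseq]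
      simp only [Finset.prod_singleton, hti0, pow_one, Pi.add_apply, Pi.sub_apply]
      ring
  linear_combination (MvPolynomial.coeff t G) * key




variable {n : ℕ}


lemma psi_eq_coeff (x : Fin n → ℝ) (i : Fin n) :
    psi n x i = (-1 : ℝ) ^ (i.1 + 1) * (P x).coeff (n - (i.1 + 1)) := by
  rw [coeff_P x (Nat.succ_le_of_lt i.2), ← mul_assoc, ← pow_add]
  have : Even ((i.1 + 1) + (i.1 + 1)) := Even.add_self _
  rw [this.neg_one_pow, one_mul]
  rfl

lemma perturb_points {k : ℕ} (z : Fin n → ℝ) (hz : ∀ i, 0 ≤ z i)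
    (hm : k + 1 ≤ ((Finset.univ.image z).filter (· ≠ 0)).card) :
    ∃ (xp xm : Fin n → ℝ) (w : Fin n → ℝ),
      (∀ i, 0 ≤ xp i) ∧ (∀ i, 0 ≤ xm i) ∧
      psi n xp = psi n z + w ∧ psi n xm = psi n z - w ∧
      (∀ i : Fin n, i.1 < k → w i = 0) ∧ w ≠ 0 := by
  classical
  set Vals : Finset ℝ := (Finset.univ.image z).filter (· ≠ 0) with hVals
  set m : ℕ := Vals.card with hmdef
  have hm1 : 1 ≤ m := le_trans (by omega) hm
  have hmn : m ≤ n := by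
    calc m ≤ (Finset.univ.image z).card := Finset.card_filter_le _ _
    _ ≤ (Finset.univ : Finset (Fin n)).card := Finset.card_image_le
    _ = n := by simp
  -- the distinct nonzero values, increasing
  set tv : Fin m → ℝ := fun i => ((Vals.orderIsoOfFin rfl) i : ℝ) with htv
  have htmono : StrictMono tv := by
    intro a b hab
    exact (Vals.orderIsoOfFin rfl).strictMono hab
  have htmem : ∀ i, tv i ∈ Vals := fun i => ((Vals.orderIsoOfFin rfl) i).2
  have htpos : ∀ i, 0 < tv i := by
    intro i
    have h1 := htmem i
    rw [hVals, Finset.mem_filter] at h1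
    obtain ⟨h2, h3⟩ := h1
    obtain ⟨j, _, hj⟩ := Finset.mem_image.1 h2
    have := hz j
    rw [hj] at this
    rcases lt_or_eq_of_le this with h | h
    · exact h
    · exact absurd h.symm h3
  -- representatives
  have hrepex : ∀ i : Fin m, ∃ j : Fin n, z j = tv i := by
    intro i
    have h1 := htmem i
    rw [hVals, Finset.mem_filter] at h1
    obtain ⟨j, _, hj⟩ := Finset.mem_image.1 h1.1
    exact ⟨j, hj⟩
  choose rep hrep using hrepex
  have hrepinj : Function.Injective rep := by
    intro a b hab
    have : tv a = tv b := by rw [← hrep a, ← hrep b, hab]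
    exact htmono.injective this
  set R : Finset (Fin n) := Finset.image rep Finset.univ with hR
  set Frozen : Polynomial ℝ := ∏ j ∈ Rᶜ, (Polynomial.X + Polynomial.C (-(z j))) with hFrozen
  have hFrozenMonic : Frozen.Monic := monic_prod_of_monic _ _ fun j _ => monic_X_add_C _
  have hFrozenDeg : Frozen.natDegree = n - m := by
    rw [hFrozen, natDegree_prod_of_monic _ _ fun j _ => monic_X_add_C _]
    simp only [natDegree_X_add_C]
    rw [Finset.sum_const, smul_eq_mul, mul_one, Finset.card_compl, Fintype.card_fin]
    congr 1
    rw [hR, Finset.card_image_of_injective _ hrepinj, Finset.card_univ, Fintype.card_fin]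
  -- splitting of P z
  have hsplit : ∀ x : Fin n → ℝ,
      P x = (∏ j ∈ R, (Polynomial.X + Polynomial.C (-(x j)))) * ∏ j ∈ Rᶜ, (Polynomial.X + Polynomial.C (-(x j))) := by
    intro x
    rw [P, ← Finset.prod_mul_prod_compl R]
  have hPz : P z = (∏ i : Fin m, (Polynomial.X + Polynomial.C (-(tv i)))) * Frozen := by
    rw [hsplit z, hFrozen]
    congr 1
    rw [hR, Finset.prod_image (fun a _ b _ h => hrepinj h)]
    exact Finset.prod_congr rfl fun i _ => by rw [hrep]
  -- perturbed roots
  obtain ⟨δ0, hδ0pos, hδ0⟩ := perturb_roots hm1 tv htmono htpos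
  obtain ⟨rp, hrppos, hrpeq⟩ := hδ0 δ0 (by rw [abs_of_pos hδ0pos])
  obtain ⟨rm, hrmpos, hrmeq⟩ := hδ0 (-δ0) (by rw [abs_neg, abs_of_pos hδ0pos])
  -- the perturbed points
  set xof : (Fin m → ℝ) → (Fin n → ℝ) := fun r' j =>
    if h : ∃ i, rep i = j then r' h.choose else z j with hxof
  have hxof_rep : ∀ (r' : Fin m → ℝ) (i : Fin m), xof r' (rep i) = r' i := by
    intro r' i
    rw [hxof]
    dsimp only
    have hex : ∃ i', rep i' = rep i := ⟨i, rfl⟩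
    rw [dif_pos hex]
    congr 1
    exact hrepinj hex.choose_spec
  have hxof_nrep : ∀ (r' : Fin m → ℝ) (j : Fin n), j ∉ R → xof r' j = z j := by
    intro r' j hj
    rw [hxof]
    dsimp only
    rw [dif_neg]
    intro ⟨i, hi⟩
    exact hj (by rw [hR, ← hi]; exact Finset.mem_image_of_mem _ (Finset.mem_univ _))
  have hPxof : ∀ (r' : Fin m → ℝ) (δ : ℝ),
      ((∏ i, (Polynomial.X + Polynomial.C (-(r' i)))) = (∏ i, (Polynomial.X + Polynomial.C (-(tv i)))) + Polynomial.C δ) →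
      P (xof r') = P z + Polynomial.C δ * Frozen := by
    intro r' δ heq
    rw [hsplit (xof r')]
    have h1 : (∏ j ∈ R, (Polynomial.X + Polynomial.C (-(xof r' j)))) = ∏ i : Fin m, (Polynomial.X + Polynomial.C (-(r' i))) := by
      rw [hR, Finset.prod_image (fun a _ b _ h => hrepinj h)]
      exact Finset.prod_congr rfl fun i _ => by rw [hxof_rep]
    have h2 : (∏ j ∈ Rᶜ, (Polynomial.X + Polynomial.C (-(xof r' j)))) = Frozen := by
      rw [hFrozen]
      exact Finset.prod_congr rfl fun j hj => by
        rw [hxof_nrep r' j (Finset.mem_compl.1 hj)]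
    rw [h1, h2, heq, hPz]
    ring
  have hPp : P (xof rp) = P z + Polynomial.C δ0 * Frozen := hPxof rp δ0 hrpeq
  have hPm : P (xof rm) = P z + Polynomial.C (-δ0) * Frozen := hPxof rm (-δ0) hrmeq
  -- the displacement vector
  set w : Fin n → ℝ := fun i => (-1 : ℝ) ^ (i.1 + 1) * δ0 * Frozen.coeff (n - (i.1 + 1))
    with hw
  have hpsip : psi n (xof rp) = psi n z + w := by
    funext i
    rw [Pi.add_apply, psi_eq_coeff, psi_eq_coeff, hPp, Polynomial.coeff_add, mul_add, hw]
    simp only [Polynomial.coeff_C_mul]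
    ring
  have hpsim : psi n (xof rm) = psi n z - w := by
    funext i
    rw [Pi.sub_apply, psi_eq_coeff, psi_eq_coeff, hPm, Polynomial.coeff_add, mul_add, hw]
    simp only [Polynomial.coeff_C_mul]
    ring
  have hwlow : ∀ i : Fin n, i.1 < k → w i = 0 := by
    intro i hik
    rw [hw]
    dsimp only
    have hco : Frozen.coeff (n - (i.1 + 1)) = 0 := by
      apply Polynomial.coeff_eq_zero_of_natDegree_lt
      rw [hFrozenDeg]
      omega
    rw [hco]
    ring
  have hwne : w ≠ 0 := by
    intro h0
    have hmi : m - 1 < n := by omega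
    have := congrFun h0 ⟨m - 1, hmi⟩
    rw [hw] at this
    dsimp only at this
    have hidx : n - ((m - 1) + 1) = n - m := by omega
    rw [hidx] at this
    have hlead : Frozen.coeff (n - m) = 1 := by
      rw [← hFrozenDeg]
      exact hFrozenMonic.coeff_natDegree
    rw [hlead, mul_one, Pi.zero_apply] at this
    have h1 : ((-1 : ℝ) ^ ((m - 1 : ℕ) + 1)) ≠ 0 := by
      apply pow_ne_zero
      norm_num
    have := mul_eq_zero.1 this
    rcases this with h | h
    · exact h1 h
    · exact (ne_of_gt hδ0pos) h
  exact ⟨xof rp, xof rm, w, by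
      intro j
      by_cases hj : ∃ i, rep i = j
      · obtain ⟨i, rfl⟩ := hj
        rw [hxof_rep]
        exact le_of_lt (hrppos i)
      · rw [hxof]
        dsimp only
        rw [dif_neg hj]
        exact hz j,
    by
      intro j
      by_cases hj : ∃ i, rep i = j
      · obtain ⟨i, rfl⟩ := hj
        rw [hxof_rep]
        exact le_of_lt (hrmpos i)
      · rw [hxof]
        dsimp only
        rw [dif_neg hj]
        exact hz j,
    hpsip, hpsim, hwlow, hwne⟩

end MvPart

end HDP

section Main
open Polynomial Finset MvPolynomial HDP

/-- **Half degree principle on the nonnegative orthant.** A symmetric real polynomial `F` of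
total degree `d ≥ 1` is nonnegative on the nonnegative orthant iff it is nonnegative on the
set of points of the nonnegative orthant whose nonzero coordinates take at most
`k = max {2, ⌊d/2⌋}` distinct values. -/
theorem half_degree_principle_nonneg_orthant (n d : ℕ) (hn : 1 ≤ n) (hd : 1 ≤ d)
    (F : MvPolynomial (Fin n) ℝ) (hF : MvPolynomial.IsSymmetric F)
    (hdeg : F.totalDegree = d) (k : ℕ) (hk : k = max 2 (d / 2)) :
    (∀ x : Fin n → ℝ, (∀ i, 0 ≤ x i) → 0 ≤ MvPolynomial.eval x F) ↔
      (∀ y : Fin n → ℝ, (∀ i, 0 ≤ y i) →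
        ((Finset.univ.image y).filter (· ≠ 0)).card ≤ k →
        0 ≤ MvPolynomial.eval y F) := by
  constructor
  · intro h y hy _
    exact h y hy
  · intro hRHS x0 hx0
    by_contra hneg
    push_neg at hneg
    have hk2 : 2 ≤ k := by rw [hk]; exact le_max_left _ _
    have hdk : d ≤ 2 * k + 1 := by
      rcases le_total 2 (d / 2) with h | h
      · rw [hk, max_eq_right h]; omega
      · rw [hk, max_eq_left h]; omega
    obtain ⟨G, hGeval, hGdeg⟩ := exists_G F hF hdeg.le
    have hGsupp : ∀ t ∈ G.support,
        (∑ i ∈ Finset.univ.filter (fun i : Fin n => k ≤ i.1), t i) ≤ 1 := by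
      intro t ht
      by_contra hgt
      push_neg at hgt
      have h2le : 2 ≤ ∑ i ∈ Finset.univ.filter (fun i : Fin n => k ≤ i.1), t i := hgt
      have hw := hGdeg t ht
      have hwa : (Finsupp.weight (wt n)) t = ∑ i ∈ t.support, t i * (i.1 + 1) := by
        rw [Finsupp.weight_apply, Finsupp.sum]
        exact Finset.sum_congr rfl fun i _ => by simp [wt, smul_eq_mul]
      have hle1 : ∑ i ∈ Finset.univ.filter (fun i : Fin n => k ≤ i.1), t i * (k + 1)
          ≤ ∑ i ∈ Finset.univ.filter (fun i : Fin n => k ≤ i.1), t i * (i.1 + 1) := by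
        refine Finset.sum_le_sum fun i hi => ?_
        have := (Finset.mem_filter.1 hi).2
        exact Nat.mul_le_mul_left _ (by omega)
      have hle2 : ∑ i ∈ Finset.univ.filter (fun i : Fin n => k ≤ i.1), t i * (i.1 + 1)
          ≤ ∑ i ∈ Finset.univ, t i * (i.1 + 1) :=
        Finset.sum_le_sum_of_subset (Finset.filter_subset _ _)
      have hle3 : ∑ i ∈ Finset.univ, t i * (i.1 + 1) = ∑ i ∈ t.support, t i * (i.1 + 1) := by
        refine (Finset.sum_subset (Finset.subset_univ _) fun i _ hi => ?_).symm
        rw [Finsupp.notMem_support_iff.1 hi, zero_mul]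
      have hfin : 2 * (k + 1) ≤ d := by
        calc 2 * (k + 1)
            ≤ (∑ i ∈ Finset.univ.filter (fun i : Fin n => k ≤ i.1), t i) * (k + 1) :=
              Nat.mul_le_mul_right _ h2le
          _ = ∑ i ∈ Finset.univ.filter (fun i : Fin n => k ≤ i.1), t i * (k + 1) :=
              Finset.sum_mul _ _ _
          _ ≤ d := by rw [← hwa] at *; omega
      omega
    -- the fiber
    set K : Set (Fin n → ℝ) :=
      {x | ∀ i, 0 ≤ x i} ∩ {x | ∀ i : Fin n, i.1 < k → psi n x i = psi n x0 i} with hK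
    have hx0K : x0 ∈ K := ⟨hx0, fun _ _ => rfl⟩
    have hpsicont : ∀ i : Fin n, Continuous fun x : Fin n → ℝ => psi n x i := fun i =>
      MvPolynomial.continuous_eval _
    have hKclosed : IsClosed K := by
      refine IsClosed.inter ?_ ?_
      · have he : {x : Fin n → ℝ | ∀ i, 0 ≤ x i} = ⋂ i, {x | 0 ≤ x i} := by
          ext x; simp [Set.mem_iInter]
        rw [he]
        exact isClosed_iInter fun i => isClosed_le continuous_const (continuous_apply i)
      · have he : {x : Fin n → ℝ | ∀ i : Fin n, i.1 < k → psi n x i = psi n x0 i}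
            = ⋂ i : Fin n, {x | i.1 < k → psi n x i = psi n x0 i} := by
          ext x; simp [Set.mem_iInter]
        rw [he]
        refine isClosed_iInter fun i => ?_
        by_cases hik : i.1 < k
        · have he2 : {x : Fin n → ℝ | i.1 < k → psi n x i = psi n x0 i}
              = {x | psi n x i = psi n x0 i} := by
            ext x; simp [hik]
          rw [he2]
          exact isClosed_eq (hpsicont i) continuous_const
        · have he2 : {x : Fin n → ℝ | i.1 < k → psi n x i = psi n x0 i} = Set.univ := by
            ext x; simp [hik]
          rw [he2]
          exact isClosed_univ
    have hzero : (0 : ℕ) < n := hn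
    have hpsi_one : ∀ x : Fin n → ℝ, psi n x ⟨0, hzero⟩ = ∑ j, x j := by
      intro x
      show MvPolynomial.eval x (MvPolynomial.esymm (Fin n) ℝ (0 + 1)) = _
      rw [Nat.zero_add, MvPolynomial.esymm_one, map_sum]
      simp
    have hKsub : K ⊆ Set.Icc (fun _ => 0) (fun _ => psi n x0 ⟨0, hzero⟩) := by
      intro x hx
      constructor
      · intro i
        exact hx.1 i
      · intro i
        have h1 : psi n x ⟨0, hzero⟩ = psi n x0 ⟨0, hzero⟩ := hx.2 ⟨0, hzero⟩ (by show (0:ℕ) < k; omega)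
        rw [← h1, hpsi_one]
        exact Finset.single_le_sum (fun j _ => hx.1 j) (Finset.mem_univ i)
    have hKcompact : IsCompact K :=
      IsCompact.of_isClosed_subset isCompact_Icc hKclosed hKsub
    -- the auxiliary strictly concave part
    set hfun : (Fin n → ℝ) → ℝ := fun x => ∑ i, (psi n x i) ^ 2 with hhfun
    have hhcont : Continuous hfun :=
      continuous_finset_sum _ fun i _ => (hpsicont i).pow 2
    have hh0 : ∀ x, 0 ≤ hfun x := fun x => Finset.sum_nonneg fun i _ => sq_nonneg _
    obtain ⟨xM, hxMK, hxMmax⟩ := hKcompact.exists_isMaxOn ⟨x0, hx0K⟩ hhcont.continuousOn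
    set M : ℝ := hfun xM with hM
    have hM0 : 0 ≤ M := hh0 xM
    set ε : ℝ := (- MvPolynomial.eval x0 F) / (2 * (M + 1)) with hε
    have hεpos : 0 < ε := div_pos (neg_pos.2 hneg) (by linarith)
    set g : (Fin n → ℝ) → ℝ := fun x => MvPolynomial.eval x F - ε * hfun x with hg
    have hgcont : Continuous g :=
      (MvPolynomial.continuous_eval _).sub (continuous_const.mul hhcont)
    obtain ⟨z, hzK, hzmin⟩ := hKcompact.exists_isMinOn ⟨x0, hx0K⟩ hgcont.continuousOn
    by_cases hcard : ((Finset.univ.image z).filter (· ≠ 0)).card ≤ k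
    · have hFz := hRHS z hzK.1 hcard
      have hgz : g z ≤ g x0 := hzmin hx0K
      have hhz : hfun z ≤ M := hxMmax hzK
      have hhx0 : 0 ≤ hfun x0 := hh0 x0
      have hchain : MvPolynomial.eval z F ≤ MvPolynomial.eval x0 F + ε * M := by
        have h1 : MvPolynomial.eval z F - ε * hfun z
            ≤ MvPolynomial.eval x0 F - ε * hfun x0 := hgz
        nlinarith
      have hfinal : MvPolynomial.eval x0 F + ε * M < 0 := by
        have hε2 : ε * (2 * (M + 1)) = - MvPolynomial.eval x0 F := by
          rw [hε]
          field_simp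
        nlinarith
      linarith
    · push_neg at hcard
      obtain ⟨xp, xm, w, hxp0, hxm0, hpsip, hpsim, hwlow, hwne⟩ :=
        perturb_points (k := k) z hzK.1 (by omega)
      have hxpK : xp ∈ K := by
        refine ⟨hxp0, fun i hik => ?_⟩
        have := congrFun hpsip i
        rw [Pi.add_apply, hwlow i hik, add_zero] at this
        rw [this]
        exact hzK.2 i hik
      have hxmK : xm ∈ K := by
        refine ⟨hxm0, fun i hik => ?_⟩
        have := congrFun hpsim i
        rw [Pi.sub_apply, hwlow i hik, sub_zero] at this
        rw [this]
        exact hzK.2 i hik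
      have h1 : g z ≤ g xp := hzmin hxpK
      have h2 : g z ≤ g xm := hzmin hxmK
      have hmid : MvPolynomial.eval xp F + MvPolynomial.eval xm F
          = 2 * MvPolynomial.eval z F := by
        rw [hGeval xp, hGeval xm, hGeval z, hpsip, hpsim]
        exact midpoint_eval G hGsupp (psi n z) w hwlow
      have hhsum : hfun xp + hfun xm = 2 * hfun z + 2 * ∑ i, (w i) ^ 2 := by
        have e1 : hfun xp = ∑ i, (psi n z i + w i) ^ 2 := by
          rw [hhfun]
          exact Finset.sum_congr rfl fun i _ => by rw [congrFun hpsip i, Pi.add_apply]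
        have e2 : hfun xm = ∑ i, (psi n z i - w i) ^ 2 := by
          rw [hhfun]
          exact Finset.sum_congr rfl fun i _ => by rw [congrFun hpsim i, Pi.sub_apply]
        rw [e1, e2, ← Finset.sum_add_distrib, hhfun]
        dsimp only
        rw [Finset.mul_sum, Finset.mul_sum, ← Finset.sum_add_distrib]
        exact Finset.sum_congr rfl fun i _ => by ring
      have hw2pos : 0 < ∑ i, (w i) ^ 2 := by
        obtain ⟨i0, hi0⟩ := Function.ne_iff.1 hwne
        refine Finset.sum_pos' (fun i _ => sq_nonneg _) ⟨i0, Finset.mem_univ _, ?_⟩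
        have : w i0 ≠ 0 := hi0
        positivity
      have hcomb : g xp + g xm = 2 * g z - 2 * ε * ∑ i, (w i) ^ 2 := by
        show MvPolynomial.eval xp F - ε * hfun xp + (MvPolynomial.eval xm F - ε * hfun xm)
          = 2 * (MvPolynomial.eval z F - ε * hfun z) - 2 * ε * ∑ i, (w i) ^ 2
        linear_combination hmid - ε * hhsum
      have hprod := mul_pos hεpos hw2pos
      linarith

end Main
end

section
/- Let n ≥ 1, let F ∈ ℝ[x_1,…,x_n] be a symmetric polynomial of total degree d with 2 ≤ d ≤ n, set k := ⌊d/2⌋, and let G ∈ ℝ[z_1,…,z_n] be the unique polynomial with F = G(e_1,…,e_n), where e_i is the i-th elementary symmetric polynomial. Then G involves only the variables z_1,…,z_d, and there exist polynomials G_0 ∈ ℝ[z_1,…,z_k] and G_i ∈ ℝ[z_1,…,z_{d−i}] for i = k+1,…,d such that G = G_0 + Σ_{i=k+1}^{d} G_i · z_i; in particular every variable z_i with i > k appears at most linearly in G and no monomial of G contains two distinct variables z_i, z_j with i, j > k. -/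
open MvPolynomial Finset

private lemma esymm_homog (σ : Type*) [Fintype σ] [DecidableEq σ] (i : ℕ) :
    (esymm σ ℝ i).IsHomogeneous i := by
  rw [esymm]
  apply IsHomogeneous.sum _ _ i
  intro s hs
  have := IsHomogeneous.prod s (fun j => (X j : MvPolynomial σ ℝ)) (fun _ => 1)
    (fun j _ => isHomogeneous_X ℝ j)
  rwa [Finset.sum_const, smul_eq_mul, mul_one, mem_powersetCard_univ.mp hs] at this

private lemma aeval_monomial_homog (n : ℕ) (t : Fin n →₀ ℕ) (c : ℝ) :
    (aeval (fun i : Fin n => esymm (Fin n) ℝ ((i : ℕ) + 1)) (monomial t c)).IsHomogeneous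
      (Finsupp.weight (fun i : Fin n => (i : ℕ) + 1) t) := by
  rw [aeval_monomial]
  have h1 : (algebraMap ℝ (MvPolynomial (Fin n) ℝ) c).IsHomogeneous 0 := isHomogeneous_C _ _
  have h2 := IsHomogeneous.prod t.support
      (fun i : Fin n => esymm (Fin n) ℝ ((i : ℕ) + 1) ^ t i)
      (fun i : Fin n => ((i : ℕ) + 1) * t i)
      (fun i _ => (esymm_homog (Fin n) ((i : ℕ) + 1)).pow (t i))
  have := h1.mul h2
  rw [zero_add] at this
  convert this using 1
  · rfl
  · rw [Finsupp.weight_apply, Finsupp.sum]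
    exact Finset.sum_congr rfl fun i _ => by simp [mul_comm]

private lemma hc_aeval (n m : ℕ) (G : MvPolynomial (Fin n) ℝ) :
    homogeneousComponent m (aeval (fun i : Fin n => esymm (Fin n) ℝ ((i : ℕ) + 1)) G)
      = aeval (fun i : Fin n => esymm (Fin n) ℝ ((i : ℕ) + 1))
          (weightedHomogeneousComponent (fun i : Fin n => (i : ℕ) + 1) m G) := by
  classical
  induction G using MvPolynomial.induction_on' with
  | add p q hp hq => simp only [map_add, hp, hq]
  | monomial t c =>
    rw [homogeneousComponent_of_mem
      ((mem_homogeneousSubmodule _ _).2 (aeval_monomial_homog n t c)),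
      weightedHomogeneousComponent_of_mem
      ((mem_weightedHomogeneousSubmodule _ _ _ _).2 (isWeightedHomogeneous_monomial _ t c rfl))]
    split_ifs <;> simp

private lemma key_bound (n d : ℕ) (F G : MvPolynomial (Fin n) ℝ)
    (hdeg : F.totalDegree = d)
    (hG : F = aeval (fun i : Fin n => esymm (Fin n) ℝ ((i : ℕ) + 1)) G) :
    ∀ t ∈ G.support, Finsupp.weight (fun i : Fin n => (i : ℕ) + 1) t ≤ d := by
  classical
  intro t ht
  by_contra hlt
  push_neg at hlt
  set w : Fin n → ℕ := fun i => (i : ℕ) + 1 with hw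
  set m := Finsupp.weight w t with hm
  have h0 : homogeneousComponent m F = 0 :=
    homogeneousComponent_eq_zero _ _ (by omega : F.totalDegree < m)
  rw [hG, hc_aeval] at h0
  have hinj := esymmAlgHom_fin_injective (R := ℝ) (n := n) (m := n) le_rfl
  have hzero : weightedHomogeneousComponent w m G = 0 := by
    apply hinj
    rw [map_zero]
    apply Subtype.ext
    rw [esymmAlgHom_apply]
    simpa using h0
  have := coeff_weightedHomogeneousComponent (w := w) m G t
  rw [hzero, if_pos rfl, coeff_zero] at this
  exact (mem_support_iff.mp ht) this.symm

private lemma support_sum_mono' {n : ℕ} {A : Type*} (S : Finset A) (g : A → (Fin n →₀ ℕ))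
    (c : A → ℝ) : (∑ t ∈ S, monomial (g t) (c t)).support ⊆ S.image g := by
  classical
  intro u hu
  rw [mem_support_iff] at hu
  by_contra hus
  apply hu
  rw [coeff_sum]
  refine Finset.sum_eq_zero fun t ht => ?_
  rw [coeff_monomial, if_neg]
  rintro rfl
  exact hus (Finset.mem_image_of_mem g ht)

/-- Structure of the representation of a symmetric polynomial of degree `d` in terms of the
elementary symmetric polynomials: writing `F = G(e_1, …, e_n)` (variables `z_1, …, z_n` are
indexed here by `Fin n`, the variable `z_{i+1}` corresponding to the index `i : Fin n`),
the polynomial `G` involves only `z_1, …, z_d`, and it decomposes as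
`G = G_0 + ∑_{i=k+1}^{d} G_i z_i` where `G_0 ∈ ℝ[z_1, …, z_k]` and
`G_i ∈ ℝ[z_1, …, z_{d-i}]`, with `k = ⌊d/2⌋`. -/
theorem symm_poly_representation_structure (n d : ℕ) (hn : 1 ≤ n) (hd2 : 2 ≤ d) (hdn : d ≤ n)
    (F : MvPolynomial (Fin n) ℝ) (hF : MvPolynomial.IsSymmetric F)
    (hdeg : F.totalDegree = d) (k : ℕ) (hk : k = d / 2)
    (G : MvPolynomial (Fin n) ℝ)
    (hG : F = MvPolynomial.aeval
      (fun i : Fin n => MvPolynomial.esymm (Fin n) ℝ ((i : ℕ) + 1)) G) :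
    (∀ j ∈ G.vars, (j : ℕ) + 1 ≤ d) ∧
    ∃ (G0 : MvPolynomial (Fin n) ℝ) (Gi : Fin n → MvPolynomial (Fin n) ℝ),
      (∀ j ∈ G0.vars, (j : ℕ) + 1 ≤ k) ∧
      (∀ i : Fin n, k + 1 ≤ (i : ℕ) + 1 → (i : ℕ) + 1 ≤ d →
        ∀ j ∈ (Gi i).vars, (j : ℕ) + 1 ≤ d - ((i : ℕ) + 1)) ∧
      G = G0 + ∑ i ∈ Finset.univ.filter
          (fun i : Fin n => k + 1 ≤ (i : ℕ) + 1 ∧ (i : ℕ) + 1 ≤ d),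
          Gi i * MvPolynomial.X i := by
  classical
  have hWt : ∀ t : Fin n →₀ ℕ,
      Finsupp.weight (fun i : Fin n => (i : ℕ) + 1) t
        = ∑ i ∈ t.support, t i * ((i : ℕ) + 1) := by
    intro t
    rw [Finsupp.weight_apply, Finsupp.sum]
    exact Finset.sum_congr rfl fun i _ => by simp
  have key : ∀ t ∈ G.support, ∑ i ∈ t.support, t i * ((i : ℕ) + 1) ≤ d := by
    intro t ht
    rw [← hWt]
    exact key_bound n d F G hdeg hG t ht
  have hsingle : ∀ t ∈ G.support, ∀ i ∈ t.support, t i * ((i : ℕ) + 1) ≤ d := by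
    intro t ht i hi
    exact le_trans (Finset.single_le_sum (f := fun i : Fin n => t i * ((i : ℕ) + 1))
      (fun _ _ => Nat.zero_le _) hi) (key t ht)
  have hpair : ∀ t ∈ G.support, ∀ i ∈ t.support, ∀ j ∈ t.support, i ≠ j →
      t i * ((i : ℕ) + 1) + t j * ((j : ℕ) + 1) ≤ d := by
    intro t ht i hi j hj hij
    have hsub : ({i, j} : Finset (Fin n)) ⊆ t.support := by
      intro x hx
      rcases Finset.mem_insert.mp hx with rfl | hx
      · exact hi
      · rw [Finset.mem_singleton] at hx; exact hx ▸ hj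
    have := Finset.sum_le_sum_of_subset (f := fun x => t x * ((x : ℕ) + 1)) hsub
    rw [Finset.sum_pair hij] at this
    exact le_trans this (key t ht)
  constructor
  · intro j hj
    obtain ⟨t, ht, hjt⟩ := (mem_vars j).mp hj
    have h1 := hsingle t ht j hjt
    have h2 : 1 ≤ t j := Nat.one_le_iff_ne_zero.mpr (Finsupp.mem_support_iff.mp hjt)
    nlinarith
  -- construction
  set big : (Fin n →₀ ℕ) → Finset (Fin n) :=
    fun t => t.support.filter (fun i => k ≤ (i : ℕ)) with hbig
  set f : (Fin n →₀ ℕ) → Fin n :=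
    fun t => if h : (big t).Nonempty then (big t).max' h else ⟨0, hn⟩ with hf
  have hfmem : ∀ t, (big t).Nonempty → f t ∈ big t := by
    intro t h
    rw [hf]
    simp only
    rw [dif_pos h]
    exact Finset.max'_mem _ h
  set S1 := G.support.filter (fun t => (big t).Nonempty) with hS1
  have hS1fact : ∀ t ∈ S1, f t ∈ t.support ∧ k ≤ ((f t : Fin n) : ℕ) ∧ t (f t) = 1 := by
    intro t ht
    rw [hS1, Finset.mem_filter] at ht
    have hm := hfmem t ht.2
    rw [hbig, Finset.mem_filter] at hm
    refine ⟨hm.1, hm.2, ?_⟩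
    have h1 := hsingle t ht.1 (f t) hm.1
    have h2 : 1 ≤ t (f t) := Nat.one_le_iff_ne_zero.mpr (Finsupp.mem_support_iff.mp hm.1)
    by_contra hne
    have ha : 2 ≤ t (f t) := by omega
    have h3 : 2 * (((f t : Fin n) : ℕ) + 1) ≤ t (f t) * (((f t : Fin n) : ℕ) + 1) :=
      Nat.mul_le_mul_right _ ha
    omega
  have hmaps : ∀ t ∈ S1, f t ∈ Finset.univ.filter
      (fun i : Fin n => k + 1 ≤ (i : ℕ) + 1 ∧ (i : ℕ) + 1 ≤ d) := by
    intro t ht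
    obtain ⟨hsup, hkf, h1⟩ := hS1fact t ht
    have htmem : t ∈ G.support := (Finset.mem_filter.mp (hS1 ▸ ht)).1
    have hb := hsingle t htmem (f t) hsup
    rw [h1, one_mul] at hb
    simp only [Finset.mem_filter, Finset.mem_univ, true_and]
    omega
  refine ⟨∑ t ∈ G.support.filter (fun t => ¬ (big t).Nonempty), monomial t (coeff t G),
    fun i => ∑ t ∈ S1.filter (fun t => f t = i),
      monomial (t - Finsupp.single i 1) (coeff t G), ?_, ?_, ?_⟩
  · intro j hj
    obtain ⟨u, hu, hju⟩ := (mem_vars j).mp hj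
    have hsub := support_sum_mono' (G.support.filter fun t => ¬ (big t).Nonempty)
      (fun t => t) (fun t => coeff t G)
    have hmem := hsub hu
    rw [Finset.image_id'] at hmem
    rw [Finset.mem_filter] at hmem
    by_contra hjk
    apply hmem.2
    exact ⟨j, by rw [hbig, Finset.mem_filter]; exact ⟨hju, by omega⟩⟩
  · intro i _ _ j hj
    obtain ⟨u, hu, hju⟩ := (mem_vars j).mp hj
    have hsub := support_sum_mono' (S1.filter fun t => f t = i)
      (fun t => t - Finsupp.single i 1) (fun t => coeff t G)
    obtain ⟨t, htm, rfl⟩ := Finset.mem_image.mp (hsub hu)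
    rw [Finset.mem_filter] at htm
    obtain ⟨htS1, hfti⟩ := htm
    obtain ⟨hft_sup, hftk, hft1⟩ := hS1fact t htS1
    rw [hfti] at hft_sup hftk hft1
    have hjval := Finsupp.mem_support_iff.mp hju
    rw [Finsupp.tsub_apply] at hjval
    have hji : j ≠ i := by
      rintro rfl
      rw [hft1, Finsupp.single_eq_same] at hjval
      exact hjval rfl
    rw [Finsupp.single_eq_of_ne' (Ne.symm hji), Nat.sub_zero] at hjval
    have hjt : j ∈ t.support := Finsupp.mem_support_iff.mpr hjval
    have htmem : t ∈ G.support := (Finset.mem_filter.mp (hS1 ▸ htS1)).1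
    have hp := hpair t htmem j hjt i hft_sup hji
    rw [hft1, one_mul] at hp
    have h2 : 1 ≤ t j := Nat.one_le_iff_ne_zero.mpr (Finsupp.mem_support_iff.mp hjt)
    have h3 : ((j : ℕ) + 1) ≤ t j * ((j : ℕ) + 1) := Nat.le_mul_of_pos_left _ h2
    omega
  · conv_lhs => rw [G.as_sum]
    rw [← Finset.sum_filter_add_sum_filter_not G.support (fun t => (big t).Nonempty), add_comm]
    congr 1
    rw [← Finset.sum_fiberwise_of_maps_to (g := f) hmaps (fun t => monomial t (coeff t G))]
    apply Finset.sum_congr rfl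
    intro i hi
    rw [Finset.sum_mul]
    apply Finset.sum_congr rfl
    intro t htm
    rw [Finset.mem_filter] at htm
    obtain ⟨htS1, hfti⟩ := htm
    obtain ⟨hft_sup, hftk, hft1⟩ := hS1fact t htS1
    rw [hfti] at hft1
    rw [X, monomial_mul, mul_one,
      tsub_add_cancel_of_le (Finsupp.single_le_iff.mpr (by omega : 1 ≤ t i))]
end

section
/- Sylvester's theorem (rank part): Let f ∈ ℝ[t] be a monic polynomial of degree n ≥ 1. Then the rank of the Sylvester matrix S(f) equals the number of distinct complex roots of f. -/
open Polynomial Matrix Module Submodule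

/-- The `r`-th power sum `p_r(f) = α_1^r + ⋯ + α_n^r` of the complex roots (with multiplicity)
of a real polynomial `f`; it is a real number, realized here as the real part. -/
noncomputable def powerSumOfRoots (f : Polynomial ℝ) (r : ℕ) : ℝ :=
  (((f.map (algebraMap ℝ ℂ)).roots.map (fun α => α ^ r)).sum).re

/-- The Sylvester matrix `S(f)` of a monic real polynomial of degree `n`:
`S(f)_{j,k} = p_{j+k-2}(f)` (with `1 ≤ j, k ≤ n`; here `j, k : Fin n` are 0-based). -/
noncomputable def sylvesterMatrix (n : ℕ) (f : Polynomial ℝ) : Matrix (Fin n) (Fin n) ℝ :=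
  fun j k => powerSumOfRoots f ((j : ℕ) + (k : ℕ))

section Aux

/-- Complexification of real vectors preserves linear independence. -/
lemma linIndep_complexify {ι n : Type*} [Fintype ι] [Fintype n]
    {u : ι → n → ℝ} (h : LinearIndependent ℝ u) :
    LinearIndependent ℂ (fun i (j : n) => ((u i j : ℝ) : ℂ)) := by
  rw [Fintype.linearIndependent_iff] at h ⊢
  intro g hg i
  have hre : ∀ j, (∑ k, g k * (u k j : ℂ)) = 0 := by
    intro j
    have := congrFun hg j
    simpa [Finset.sum_apply, smul_eq_mul] using this
  have h1 : ∀ j, ∑ k, (g k).re * u k j = 0 := by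
    intro j
    have := congrArg Complex.re (hre j)
    simpa [Complex.mul_re] using this
  have h2 : ∀ j, ∑ k, (g k).im * u k j = 0 := by
    intro j
    have := congrArg Complex.im (hre j)
    simpa [Complex.mul_im] using this
  have hr := h (fun k => (g k).re) (by funext j; simpa [Finset.sum_apply, smul_eq_mul] using h1 j) i
  have hi := h (fun k => (g k).im) (by funext j; simpa [Finset.sum_apply, smul_eq_mul] using h2 j) i
  exact Complex.ext hr hi

/-- The real coercion as an `ℝ`-linear map `(n → ℝ) →ₗ[ℝ] (n → ℂ)`. -/
noncomputable def complexifyLM (n : Type*) : (n → ℝ) →ₗ[ℝ] (n → ℂ) where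
  toFun x j := (x j : ℂ)
  map_add' x y := by funext j; simp
  map_smul' c x := by funext j; simp [Complex.real_smul]

lemma finrank_span_complexify {ι n : Type*} [Fintype ι] [Fintype n] (v : ι → n → ℝ) :
    finrank ℂ (span ℂ (Set.range (fun i (j : n) => ((v i j : ℝ) : ℂ))))
      = finrank ℝ (span ℝ (Set.range v)) := by
  classical
  set L := complexifyLM n with hL
  set W : Submodule ℝ (n → ℝ) := span ℝ (Set.range v) with hW
  set d := finrank ℝ W with hd
  let b : Basis (Fin d) ℝ W := finBasis ℝ W
  set u : Fin d → (n → ℝ) := fun k => (b k : n → ℝ) with hu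
  have hindep : LinearIndependent ℝ u := b.linearIndependent.map' W.subtype W.ker_subtype
  have hindepC : LinearIndependent ℂ (fun k (j : n) => ((u k j : ℝ) : ℂ)) :=
    linIndep_complexify hindep
  have hspanu : span ℝ (Set.range u) = W := by
    have hb := b.span_eq
    have h2 : Submodule.map W.subtype (span ℝ (Set.range b)) = Submodule.map W.subtype ⊤ := by
      rw [hb]
    rwa [Submodule.map_span, Submodule.map_top, Submodule.range_subtype,
      ← Set.range_comp] at h2
  have key : ∀ (x : n → ℝ) (s : Set (n → ℝ)), x ∈ span ℝ s → L x ∈ span ℂ (L '' s) := by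
    intro x s hx
    have h1 : L x ∈ Submodule.map L (span ℝ s) := Submodule.mem_map_of_mem hx
    rw [Submodule.map_span] at h1
    exact Submodule.span_le_restrictScalars ℝ ℂ (L '' s) h1
  have hspan : span ℂ (Set.range (fun i (j : n) => ((v i j : ℝ) : ℂ)))
      = span ℂ (Set.range (fun k (j : n) => ((u k j : ℝ) : ℂ))) := by
    apply le_antisymm
    · rw [Submodule.span_le]
      rintro _ ⟨i, rfl⟩
      have hmem : v i ∈ span ℝ (Set.range u) := by
        rw [hspanu]; exact subset_span ⟨i, rfl⟩
      have hmem2 := key _ _ hmem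
      rw [← Set.range_comp] at hmem2
      exact hmem2
    · rw [Submodule.span_le]
      rintro _ ⟨k, rfl⟩
      have hmem : u k ∈ span ℝ (Set.range v) := (b k).2
      have hmem2 := key _ _ hmem
      rw [← Set.range_comp] at hmem2
      exact hmem2
  rw [hspan, finrank_span_eq_card hindepC, Fintype.card_fin, hd]

/-- Rank of a real matrix is unchanged by complexification. -/
lemma rank_map_complex {m n : Type*} [Fintype m] [Fintype n] (A : Matrix m n ℝ) :
    (A.map (algebraMap ℝ ℂ)).rank = A.rank := by
  rw [Matrix.rank_eq_finrank_span_cols, Matrix.rank_eq_finrank_span_cols,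
    Matrix.col_def, Matrix.col_def, ← Matrix.transpose_map]
  exact finrank_span_complexify Aᵀ

end Aux

/-- **Sylvester's theorem, rank part.** For a monic real polynomial `f` of degree `n ≥ 1`,
the rank of the Sylvester matrix `S(f)` equals the number of distinct complex roots of `f`. -/
theorem sylvester_rank_eq_card_distinct_roots (n : ℕ) (hn : 1 ≤ n)
    (f : Polynomial ℝ) (hmonic : f.Monic) (hdeg : f.natDegree = n) :
    (sylvesterMatrix n f).rank = (f.map (algebraMap ℝ ℂ)).roots.toFinset.card := by
  classical
  set p : Polynomial ℂ := f.map (algebraMap ℝ ℂ) with hp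
  set μ : Multiset ℂ := p.roots with hμdef
  set R : Finset ℂ := μ.toFinset with hR
  have hsplits : (f.map (algebraMap ℝ ℂ)).Splits := IsAlgClosed.splits _
  have hμcard : Multiset.card μ = n := by
    rw [hμdef, hp, ← hsplits.natDegree_eq_card_roots, natDegree_map, hdeg]
  have hRcard : R.card ≤ n := hμcard ▸ μ.toFinset_card_le
  -- Step A: the power sums are real
  have hreal : ∀ r : ℕ, ((powerSumOfRoots f r : ℝ) : ℂ) = (μ.map (fun α => α ^ r)).sum := by
    intro r
    have hconjp : p.map (starRingEnd ℂ) = p := by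
      rw [hp, Polynomial.map_map]
      congr 1
      exact RingHom.ext fun x => Complex.conj_ofReal x
    have hμconj : μ.map (starRingEnd ℂ) = μ := by
      have hsp : p.Splits := IsAlgClosed.splits p
      have h := hsp.roots_map (starRingEnd ℂ)
      rw [hconjp] at h
      exact h.symm
    set z : ℂ := (μ.map (fun α => α ^ r)).sum with hz
    have hzconj : (starRingEnd ℂ) z = z := by
      rw [hz, map_multiset_sum, Multiset.map_map]
      conv_rhs => rw [← hμconj, Multiset.map_map]
      exact congrArg Multiset.sum (Multiset.map_congr rfl (fun α _ => by simp))
    exact Complex.conj_eq_iff_re.mp hzconj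
  -- the complexified Sylvester matrix and its Vandermonde factorization
  set V : Matrix (Fin n) {x // x ∈ R} ℂ := fun j β => (β : ℂ) ^ (j : ℕ) with hV
  set Dm : {x // x ∈ R} → ℂ := fun β => (μ.count (β : ℂ) : ℂ) with hDm
  have hDm0 : ∀ β, Dm β ≠ 0 := by
    rintro ⟨β, hβ⟩
    simp only [hDm, Nat.cast_ne_zero]
    rw [hR, Multiset.mem_toFinset] at hβ
    exact fun h => (Multiset.count_eq_zero.mp h) hβ
  set S : Matrix (Fin n) (Fin n) ℂ := (sylvesterMatrix n f).map (algebraMap ℝ ℂ) with hS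
  have hfact : S = V * (Matrix.diagonal Dm * Vᵀ) := by
    ext j k
    have hRHS : ∀ β : {x // x ∈ R},
        V j β * (Matrix.diagonal Dm * Vᵀ) β k
          = (fun γ : ℂ => ((μ.count γ : ℂ) * γ ^ ((j:ℕ)+(k:ℕ)))) (β : ℂ) := by
      intro β
      rw [Matrix.diagonal_mul, Matrix.transpose_apply]
      show (β:ℂ)^(j:ℕ) * (Dm β * (β:ℂ)^(k:ℕ)) = _
      simp only [hDm, pow_add]
      ring
    rw [Matrix.mul_apply, Finset.sum_congr rfl (fun β _ => hRHS β), Finset.univ_eq_attach,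
      Finset.sum_attach R (fun γ => ((Multiset.count γ μ : ℕ) : ℂ) * γ ^ ((j:ℕ) + (k:ℕ)))]
    rw [hS, Matrix.map_apply, sylvesterMatrix]
    rw [show ((algebraMap ℝ ℂ) (powerSumOfRoots f ((j:ℕ)+(k:ℕ))))
        = ((powerSumOfRoots f ((j:ℕ)+(k:ℕ)) : ℝ) : ℂ) from rfl, hreal]
    rw [Finset.sum_multiset_map_count]
    exact Finset.sum_congr rfl fun γ _ => by rw [nsmul_eq_mul]
  -- V has trivial kernel, by Lagrange interpolation
  have hVker : ∀ c : {x // x ∈ R} → ℂ, V.mulVec c = 0 → c = 0 := by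
    intro c hc
    funext β₀
    have hβ₀R : (β₀ : ℂ) ∈ R := β₀.2
    have hinj : Set.InjOn (id : ℂ → ℂ) (R : Set ℂ) := Set.injOn_id _
    set L : Polynomial ℂ := Lagrange.basis R id (β₀ : ℂ) with hLdef
    have hLdeg : L.natDegree < n := by
      rw [hLdef, Lagrange.natDegree_basis hinj hβ₀R]
      have : 1 ≤ R.card := Finset.card_pos.mpr ⟨(β₀ : ℂ), hβ₀R⟩
      omega
    have h1 : ∀ j : Fin n, V.mulVec c j = ∑ β : {x // x ∈ R}, (β : ℂ) ^ (j : ℕ) * c β := by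
      intro j
      simp [Matrix.mulVec, dotProduct, hV]
    have h2 : ∑ β : {x // x ∈ R}, c β * L.eval (β : ℂ) = 0 := by
      calc ∑ β : {x // x ∈ R}, c β * L.eval (β : ℂ)
          = ∑ β : {x // x ∈ R}, ∑ j ∈ Finset.range n, c β * (L.coeff j * (β : ℂ) ^ j) := by
            refine Finset.sum_congr rfl fun β _ => ?_
            rw [eval_eq_sum_range' hLdeg, Finset.mul_sum]
        _ = ∑ j ∈ Finset.range n, ∑ β : {x // x ∈ R}, c β * (L.coeff j * (β : ℂ) ^ j) :=
            Finset.sum_comm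
        _ = ∑ j : Fin n, ∑ β : {x // x ∈ R}, c β * (L.coeff (j:ℕ) * (β : ℂ) ^ (j:ℕ)) :=
            (Fin.sum_univ_eq_sum_range
              (fun j => ∑ β : {x // x ∈ R}, c β * (L.coeff j * (β : ℂ) ^ j)) n).symm
        _ = ∑ j : Fin n, L.coeff (j:ℕ) * V.mulVec c j := by
            refine Finset.sum_congr rfl fun j _ => ?_
            rw [h1 j, Finset.mul_sum]
            exact Finset.sum_congr rfl fun β _ => by ring
        _ = 0 := by rw [hc]; simp
    have h3 : ∑ β : {x // x ∈ R}, c β * L.eval (β : ℂ) = c β₀ := by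
      rw [Finset.sum_eq_single β₀]
      · rw [hLdef]
        have := Lagrange.eval_basis_self hinj hβ₀R
        simp only [id_eq] at this
        rw [this, mul_one]
      · intro b _ hb
        have hne : (β₀ : ℂ) ≠ (b : ℂ) := fun h => hb (Subtype.ext h.symm)
        rw [hLdef]
        have := Lagrange.eval_basis_of_ne (s := R) (v := (id : ℂ → ℂ)) hne b.2
        simp only [id_eq] at this
        rw [this, mul_zero]
      · intro h
        exact absurd (Finset.mem_univ β₀) h
    rw [← h3]
    exact h2
  have hVinj : Function.Injective V.mulVecLin := by
    rw [← LinearMap.ker_eq_bot]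
    exact LinearMap.ker_eq_bot'.mpr fun c hc =>
      hVker c (by simpa [Matrix.mulVecLin_apply] using hc)
  -- kernels agree
  have hkerS : LinearMap.ker S.mulVecLin = LinearMap.ker (Vᵀ).mulVecLin := by
    ext x
    simp only [LinearMap.mem_ker, Matrix.mulVecLin_apply]
    constructor
    · intro hx
      have h1 : V.mulVec ((Matrix.diagonal Dm * Vᵀ).mulVec x) = 0 := by
        rw [Matrix.mulVec_mulVec, ← hfact, hx]
      have h2 := hVker _ h1
      have h3 : (Matrix.diagonal Dm).mulVec (Vᵀ.mulVec x) = 0 := by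
        rw [Matrix.mulVec_mulVec]; exact h2
      funext β
      have h4 := congrFun h3 β
      rw [Matrix.mulVec_diagonal] at h4
      rcases mul_eq_zero.mp h4 with h | h
      · exact absurd h (hDm0 β)
      · exact h
    · intro hx
      rw [hfact, ← Matrix.mulVec_mulVec, ← Matrix.mulVec_mulVec, hx,
        Matrix.mulVec_zero, Matrix.mulVec_zero]
  -- rank bookkeeping
  have e1 : S.rank + finrank ℂ (LinearMap.ker S.mulVecLin) = n := by
    rw [Matrix.rank, LinearMap.finrank_range_add_finrank_ker,
      finrank_fintype_fun_eq_card, Fintype.card_fin]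
  have e2 : (Vᵀ).rank + finrank ℂ (LinearMap.ker (Vᵀ).mulVecLin) = n := by
    rw [Matrix.rank, LinearMap.finrank_range_add_finrank_ker,
      finrank_fintype_fun_eq_card, Fintype.card_fin]
  have e3 : S.rank = (Vᵀ).rank := by
    rw [hkerS] at e1
    omega
  have e4 : V.rank = R.card := by
    rw [Matrix.rank, LinearMap.finrank_range_of_inj hVinj,
      finrank_fintype_fun_eq_card, Fintype.card_coe]
  have e5 : (sylvesterMatrix n f).rank = S.rank := (rank_map_complex _).symm
  rw [e5, e3, Matrix.rank_transpose, e4]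
end

section
/- A monic polynomial f ∈ ℝ[t] of degree n ≥ 1 is hyperbolic (i.e., all of its complex roots are real) if and only if its Sylvester matrix S(f) is positive semidefinite. -/
open Polynomial Matrix Complex Finset

lemma multiset_sum_map_finset_sum {ι α β : Type*} [AddCommMonoid β] (M : Multiset α)
    (s : Finset ι) (g : ι → α → β) :
    (M.map (fun b => ∑ j ∈ s, g j b)).sum = ∑ j ∈ s, (M.map (g j)).sum := by
  induction M using Multiset.induction_on with
  | empty => simp
  | cons a M ih => simp [ih, Finset.sum_add_distrib]

lemma sylvester_quadForm (n : ℕ) (f : Polynomial ℝ) (x : Fin n → ℝ) :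
    x ⬝ᵥ (sylvesterMatrix n f *ᵥ x) =
      (((f.map (algebraMap ℝ ℂ)).roots.map
        (fun β => (∑ j : Fin n, (x j : ℂ) * β ^ (j : ℕ)) ^ 2)).sum).re := by
  have hF : ∀ β : ℂ, (∑ j : Fin n, (x j : ℂ) * β ^ (j : ℕ)) ^ 2
      = ∑ j : Fin n, ∑ k : Fin n, ((x j * x k : ℝ) : ℂ) * β ^ ((j : ℕ) + (k : ℕ)) := by
    intro β
    rw [sq, Finset.sum_mul_sum]
    refine Finset.sum_congr rfl fun j _ => Finset.sum_congr rfl fun k _ => ?_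
    rw [pow_add]; push_cast; ring
  simp_rw [hF, multiset_sum_map_finset_sum, Multiset.sum_map_mul_left, Complex.re_sum,
    Complex.re_ofReal_mul]
  simp only [dotProduct, mulVec, sylvesterMatrix, powerSumOfRoots, dotProduct, Finset.mul_sum]
  refine Finset.sum_congr rfl fun j _ => Finset.sum_congr rfl fun k _ => ?_
  ring


lemma splits_iff_roots_real (f : Polynomial ℝ) :
    f.Splits ↔ ∀ β ∈ (f.map (algebraMap ℝ ℂ)).roots, β.im = 0 := by
  constructor
  · intro hs β hβ
    rw [Polynomial.Splits.roots_map hs (algebraMap ℝ ℂ)] at hβ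
    obtain ⟨b, _, rfl⟩ := Multiset.mem_map.mp hβ
    simp
  · intro h
    set g := f.map (algebraMap ℝ ℂ) with hg
    have hgsp : g.Splits := IsAlgClosed.splits g
    by_cases hf0 : f = 0
    · simp [hf0]
    have hg0 : g ≠ 0 := by
      simpa [hg] using (Polynomial.map_ne_zero_iff (algebraMap ℝ ℂ).injective).mpr hf0
    set s : Multiset ℝ := g.roots.map Complex.re with hs
    set h' : Polynomial ℝ := Polynomial.C f.leadingCoeff * (s.map (fun b => X - C b)).prod with hh'
    have hmap : h'.map (algebraMap ℝ ℂ) = g := by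
      rw [hh', Polynomial.map_mul, Polynomial.map_multiset_prod, Multiset.map_map, hs,
        Multiset.map_map]
      have : ∀ β ∈ g.roots, ((Polynomial.map (algebraMap ℝ ℂ) ∘ fun b => X - C b) ∘ Complex.re) β
          = X - C β := by
        intro β hβ
        simp only [Function.comp_apply, Polynomial.map_sub, Polynomial.map_X, Polynomial.map_C]
        congr 1
        exact congrArg Polynomial.C (Complex.ext (by simp) (by simp [h β hβ]))
      rw [Multiset.map_congr rfl this]
      conv_rhs => rw [Polynomial.Splits.eq_prod_roots (f := g) hgsp]
      congr 1
      simp [hg, Polynomial.leadingCoeff_map_of_leadingCoeff_ne_zero,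
        Polynomial.leadingCoeff_ne_zero.mpr hf0]
    have hfh : f = h' := by
      apply Polynomial.map_injective (algebraMap ℝ ℂ) (algebraMap ℝ ℂ).injective
      rw [hmap, hg]
    rw [hfh, hh']
    apply Polynomial.Splits.mul
    · exact Polynomial.Splits.C _
    · rw [Polynomial.splits_iff_card_roots, Polynomial.roots_multiset_prod_X_sub_C,
        Polynomial.natDegree_multiset_prod_X_sub_C_eq_card]


lemma multiset_sum_nonpos {m : Multiset ℝ} (h : ∀ a ∈ m, a ≤ 0) : m.sum ≤ 0 := by
  induction m using Multiset.induction_on with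
  | empty => simp
  | cons a m ih =>
    rw [Multiset.sum_cons]
    have := h a (Multiset.mem_cons_self a m)
    have h2 := ih (fun b hb => h b (Multiset.mem_cons_of_mem hb))
    linarith



lemma forward_dir (n : ℕ) (f : Polynomial ℝ)
    (h : ∀ β ∈ (f.map (algebraMap ℝ ℂ)).roots, β.im = 0) :
    (sylvesterMatrix n f).PosSemidef := by
  refine Matrix.PosSemidef.of_dotProduct_mulVec_nonneg ?_ ?_
  · show _ = _
    ext j k
    simp [Matrix.conjTranspose_apply, sylvesterMatrix, add_comm]
  · intro x
    have hsx : star x = x := by simp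
    rw [hsx, sylvester_quadForm]
    have hre : ∀ (m : Multiset ℂ), m.sum.re = (m.map Complex.re).sum := by
      intro m
      have := map_multiset_sum Complex.reAddGroupHom m
      simpa using this
    rw [hre, Multiset.map_map]
    apply Multiset.sum_nonneg
    intro z hz
    obtain ⟨β, hβ, rfl⟩ := Multiset.mem_map.mp hz
    have hβre : ((β.re : ℝ) : ℂ) = β := Complex.ext (by simp) (by simp [h β hβ])
    simp only [Function.comp_apply]
    rw [← hβre]
    have : (∑ j : Fin n, (x j : ℂ) * ((β.re : ℝ) : ℂ) ^ (j : ℕ))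
        = ((∑ j : Fin n, x j * β.re ^ (j : ℕ) : ℝ) : ℂ) := by push_cast; ring
    rw [this, ← Complex.ofReal_pow, Complex.ofReal_re]
    exact sq_nonneg _


lemma backward_dir (n : ℕ) (hn : 1 ≤ n) (f : Polynomial ℝ) (hmonic : f.Monic) (hdeg : f.natDegree = n)
    (hPSD : (sylvesterMatrix n f).PosSemidef) :
    ∀ β ∈ (f.map (algebraMap ℝ ℂ)).roots, β.im = 0 := by
  by_contra hcon
  push_neg at hcon
  obtain ⟨α, hαmem, hαim⟩ := hcon
  set g := f.map (algebraMap ℝ ℂ) with hgdef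
  have hg0 : g ≠ 0 := (Polynomial.map_ne_zero_iff (algebraMap ℝ ℂ).injective).mpr hmonic.ne_zero
  set T : Finset ℂ := g.roots.toFinset with hT
  have hαT : α ∈ T := Multiset.mem_toFinset.mpr hαmem
  -- T is closed under conjugation
  have hconj_mem : ∀ β ∈ T, (starRingEnd ℂ) β ∈ T := by
    intro β hβ
    rw [Multiset.mem_toFinset, Polynomial.mem_roots hg0] at hβ ⊢
    have heq : ∀ z : ℂ, g.eval z = Polynomial.aeval z f := by
      intro z; rw [hgdef, Polynomial.eval_map, Polynomial.aeval_def]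
    show g.IsRoot _
    have : g.eval ((starRingEnd ℂ) β) = (starRingEnd ℂ) (g.eval β) := by
      rw [heq, heq]; exact Polynomial.aeval_conj f β
    have hβ0 : g.eval β = 0 := hβ
    show g.eval _ = 0
    rw [this, hβ0, map_zero]
  have hαconj : (starRingEnd ℂ) α ≠ α := by
    intro h; exact hαim (Complex.conj_eq_iff_im.mp h)
  -- values function
  set v : ℂ → ℂ := fun z => if z = α then Complex.I
    else if z = (starRingEnd ℂ) α then -Complex.I else 0 with hv
  have hvconj : ∀ z : ℂ, v ((starRingEnd ℂ) z) = (starRingEnd ℂ) (v z) := by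
    intro z
    by_cases h1 : z = α
    · subst h1; simp [hv, hαconj]
    by_cases h2 : z = (starRingEnd ℂ) α
    · subst h2
      have : (starRingEnd ℂ) ((starRingEnd ℂ) α) = α := Complex.conj_conj α
      simp [hv, this, hαconj, (Ne.symm hαconj)]
    · have e1 : (starRingEnd ℂ) z ≠ α := by
        intro h; apply h2; rw [← h, Complex.conj_conj]
      have e2 : (starRingEnd ℂ) z ≠ (starRingEnd ℂ) α := fun h => h1 ((starRingEnd ℂ).injective h)
      simp [hv, e1, e2, h1, h2]
  have hinj : Set.InjOn id (T : Set ℂ) := Function.injective_id.injOn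
  set L : Polynomial ℂ := Lagrange.interpolate T id v with hL
  have heval : ∀ β ∈ T, L.eval β = v β := fun β hβ =>
    Lagrange.eval_interpolate_at_node v hinj hβ
  have hdegL : L.degree < T.card := Lagrange.degree_interpolate_lt v hinj
  -- L has real coefficients
  have hLconj : L.map (starRingEnd ℂ) = L := by
    have h1 : L.map (starRingEnd ℂ) = Lagrange.interpolate T id v := by
      apply Lagrange.eq_interpolate_of_eval_eq v hinj
      · rwa [Polynomial.degree_map]
      · intro β hβ
        have e1 : (L.map (starRingEnd ℂ)).eval (id β) =
            (starRingEnd ℂ) (L.eval ((starRingEnd ℂ) β)) := by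
          conv_lhs => rw [show (id β : ℂ) = (starRingEnd ℂ) ((starRingEnd ℂ) β) from
            (Complex.conj_conj β).symm]
          rw [Polynomial.eval_map, Polynomial.eval₂_at_apply]
        rw [e1, heval _ (hconj_mem β hβ), hvconj β, Complex.conj_conj]
    rw [h1, ← hL]
  have hcoeff : ∀ k : ℕ, (((L.coeff k).re : ℝ) : ℂ) = L.coeff k := by
    intro k
    have := congrArg (fun p => Polynomial.coeff p k) hLconj
    simp only [Polynomial.coeff_map] at this
    exact Complex.conj_eq_iff_re.mp this
  have hL0 : L ≠ 0 := by
    intro h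
    have := heval α hαT
    rw [h] at this
    simp [hv] at this
    exact Complex.I_ne_zero this.symm
  have hdeg2 : L.natDegree < n := by
    rw [Polynomial.natDegree_lt_iff_degree_lt hL0]
    calc L.degree < (T.card : WithBot ℕ) := hdegL
      _ ≤ (n : WithBot ℕ) := by
        rw [Nat.cast_le (α := WithBot ℕ)]
        calc (T.card : ℕ) ≤ Multiset.card g.roots := Multiset.toFinset_card_le _
          _ ≤ g.natDegree := Polynomial.card_roots' g
          _ = n := by
            rw [hgdef, Polynomial.natDegree_map_eq_of_injective (algebraMap ℝ ℂ).injective, hdeg]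
  set x : Fin n → ℝ := fun j => (L.coeff j).re with hx
  have heval_sum : ∀ β : ℂ, (∑ j : Fin n, ((x j : ℝ) : ℂ) * β ^ (j : ℕ)) = L.eval β := by
    intro β
    rw [Polynomial.eval_eq_sum_range' hdeg2, ← Fin.sum_univ_eq_sum_range]
    exact Finset.sum_congr rfl fun j _ => by rw [hx, hcoeff]
  -- the quadratic form value is negative
  have hq := sylvester_quadForm n f x
  simp_rw [heval_sum] at hq
  have hre : ∀ (m : Multiset ℂ), m.sum.re = (m.map Complex.re).sum := by
    intro m
    have := map_multiset_sum Complex.reAddGroupHom m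
    simpa using this
  rw [hre, Multiset.map_map] at hq
  have hroots : g.roots = α ::ₘ g.roots.erase α := (Multiset.cons_erase hαmem).symm
  rw [hroots, Multiset.map_cons, Multiset.sum_cons] at hq
  have hterm_α : (Complex.re ∘ fun β => L.eval β ^ 2) α = -1 := by
    simp only [Function.comp_apply]
    rw [heval α hαT]
    simp [hv, Complex.I_sq]
  have hrest : (Multiset.map (Complex.re ∘ fun β => L.eval β ^ 2) (g.roots.erase α)).sum ≤ 0 := by
    apply multiset_sum_nonpos
    intro a ha
    obtain ⟨β, hβ, rfl⟩ := Multiset.mem_map.mp ha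
    have hβT : β ∈ T := Multiset.mem_toFinset.mpr (Multiset.mem_of_mem_erase hβ)
    simp only [Function.comp_apply]
    rw [heval β hβT, hv]
    by_cases h1 : β = α
    · simp [h1, Complex.I_sq]
    by_cases h2 : β = (starRingEnd ℂ) α
    · simp [h1, h2, Complex.I_sq]
    · simp [h1, h2]
  have hneg : x ⬝ᵥ (sylvesterMatrix n f *ᵥ x) < 0 := by
    rw [hq, hterm_α]; linarith
  have := hPSD.dotProduct_mulVec_nonneg x
  rw [show star x = x from by simp] at this
  linarith


/-- A monic real polynomial `f` of degree `n ≥ 1` is hyperbolic (all its roots are real,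
i.e. `f` splits over `ℝ`) iff its Sylvester matrix is positive semidefinite. -/
theorem hyperbolic_iff_sylvester_posSemidef (n : ℕ) (hn : 1 ≤ n)
    (f : Polynomial ℝ) (hmonic : f.Monic) (hdeg : f.natDegree = n) :
    f.Splits ↔ (sylvesterMatrix n f).PosSemidef := by
  rw [splits_iff_roots_real f]
  exact ⟨forward_dir n f, backward_dir n hn f hmonic hdeg⟩
end

section
/- Let f ∈ ℝ[t] be a monic hyperbolic polynomial of degree n ≥ 1. If ξ ∈ ℝ is a local maximum point of the function t ↦ f(t), then f(ξ) ≥ 0; if ξ is a local minimum point, then f(ξ) ≤ 0. -/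
open Polynomial

private lemma hyp_aux_le (s : Multiset ℝ) (g G : ℝ → ℝ)
    (h : ∀ r ∈ s, 0 ≤ g r ∧ g r ≤ G r) :
    (s.map g).prod ≤ (s.map G).prod := by
  induction s using Multiset.induction with
  | empty => simp
  | cons a t ih =>
    simp only [Multiset.map_cons, Multiset.prod_cons]
    have ha := h a (Multiset.mem_cons_self a t)
    have ht : ∀ r ∈ t, 0 ≤ g r ∧ g r ≤ G r := fun r hr => h r (Multiset.mem_cons_of_mem hr)
    have hP : (0:ℝ) ≤ (t.map g).prod := Multiset.prod_nonneg (by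
      intro x hx; obtain ⟨r, hr, rfl⟩ := Multiset.mem_map.mp hx; exact (ht r hr).1)
    exact mul_le_mul ha.2 (ih ht) hP (le_trans ha.1 ha.2)

private lemma hyp_aux_lt (s : Multiset ℝ) (hs : s ≠ 0) (g G : ℝ → ℝ)
    (h : ∀ r ∈ s, 0 < g r ∧ g r < G r) :
    (s.map g).prod < (s.map G).prod := by
  obtain ⟨a, ha⟩ := Multiset.exists_mem_of_ne_zero hs
  obtain ⟨t, rfl⟩ := Multiset.exists_cons_of_mem ha
  simp only [Multiset.map_cons, Multiset.prod_cons]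
  have ha' := h a (Multiset.mem_cons_self a t)
  have ht : ∀ r ∈ t, 0 ≤ g r ∧ g r ≤ G r := fun r hr =>
    ⟨(h r (Multiset.mem_cons_of_mem hr)).1.le, (h r (Multiset.mem_cons_of_mem hr)).2.le⟩
  have hle := hyp_aux_le t g G ht
  have hP : (0:ℝ) < (t.map g).prod := Multiset.prod_pos (by
    intro x hx; obtain ⟨r, hr, rfl⟩ := Multiset.mem_map.mp hx
    exact (h r (Multiset.mem_cons_of_mem hr)).1)
  nlinarith [ha'.1, ha'.2]

/-- A monic hyperbolic polynomial of degree `n ≥ 1` is nonnegative at every local maximum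
point and nonpositive at every local minimum point. -/
theorem hyperbolic_local_extrema (n : ℕ) (hn : 1 ≤ n) (f : Polynomial ℝ)
    (hmonic : f.Monic) (hdeg : f.natDegree = n) (hsplit : f.Splits)
    (ξ : ℝ) :
    (IsLocalMax (fun t => f.eval t) ξ → 0 ≤ f.eval ξ) ∧
      (IsLocalMin (fun t => f.eval t) ξ → f.eval ξ ≤ 0) := by
  by_cases h0 : f.eval ξ = 0
  · constructor <;> intro _ <;> simp [h0]
  -- product formula for eval
  have hprod : f = (f.roots.map fun a => X - C a).prod :=
    hsplit.eq_prod_roots_of_monic hmonic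
  have hf : ∀ t : ℝ, f.eval t = (f.roots.map fun r => t - r).prod := by
    intro t
    conv_lhs => rw [hprod]
    rw [eval_multiset_prod, Multiset.map_map]
    simp
  have hcard : f.roots.card = n := by
    rw [← hdeg]
    exact (splits_iff_card_roots.mp hsplit)
  have hsne : f.roots ≠ 0 := by
    intro hE; rw [hE] at hcard; simp at hcard; omega
  -- ξ is not a root
  have hnr : ∀ r ∈ f.roots, ξ ≠ r := by
    intro r hr hrr
    apply h0
    rw [hf ξ]
    apply Multiset.prod_eq_zero
    rw [Multiset.mem_map]
    exact ⟨r, hr, by rw [hrr]; ring⟩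
  -- min distance to roots
  have htne : f.roots.toFinset.Nonempty := by
    obtain ⟨a, ha⟩ := Multiset.exists_mem_of_ne_zero hsne
    exact ⟨a, Multiset.mem_toFinset.mpr ha⟩
  set d : ℝ := f.roots.toFinset.inf' htne (fun r => |ξ - r|) with hd
  have hdpos : 0 < d := by
    rw [hd, Finset.lt_inf'_iff]
    intro r hr
    have := hnr r (Multiset.mem_toFinset.mp hr)
    exact abs_pos.mpr (sub_ne_zero.mpr this)
  have hdle : ∀ r ∈ f.roots, d ≤ |ξ - r| := by
    intro r hr
    exact Finset.inf'_le _ (Multiset.mem_toFinset.mpr hr)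
  -- key inequality
  have key : ∀ h : ℝ, 0 < h → h < d →
      f.eval (ξ + h) * f.eval (ξ - h) < f.eval ξ * f.eval ξ := by
    intro h hh hhd
    rw [hf (ξ + h), hf (ξ - h), hf ξ, ← Multiset.prod_map_mul, ← Multiset.prod_map_mul]
    apply hyp_aux_lt _ hsne
    intro r hr
    have h1 : h < |ξ - r| := lt_of_lt_of_le hhd (hdle r hr)
    have h2 : h ^ 2 < (ξ - r) ^ 2 := by
      have := sq_abs (ξ - r)
      nlinarith [abs_nonneg (ξ - r)]
    constructor <;> nlinarith
  constructor
  · intro hmax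
    by_contra hneg
    push_neg at hneg
    obtain ⟨ε, hε, hball⟩ := Metric.eventually_nhds_iff.mp hmax
    set h : ℝ := min (d / 2) (ε / 2) with hh
    have hhpos : 0 < h := by positivity
    have hhd : h < d := lt_of_le_of_lt (min_le_left _ _) (by linarith)
    have hhe : h < ε := lt_of_le_of_lt (min_le_right _ _) (by linarith)
    have e1 : dist (ξ + h) ξ < ε := by
      rw [Real.dist_eq, show ξ + h - ξ = h by ring, abs_of_nonneg hhpos.le]; exact hhe
    have e2 : dist (ξ - h) ξ < ε := by
      rw [Real.dist_eq, show ξ - h - ξ = -h by ring, abs_neg, abs_of_nonneg hhpos.le]; exact hhe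
    have hp : f.eval (ξ + h) ≤ f.eval ξ := hball e1
    have hm : f.eval (ξ - h) ≤ f.eval ξ := hball e2
    have := key h hhpos hhd
    nlinarith [hp, hm, hneg]
  · intro hmin
    by_contra hpos
    push_neg at hpos
    obtain ⟨ε, hε, hball⟩ := Metric.eventually_nhds_iff.mp hmin
    set h : ℝ := min (d / 2) (ε / 2) with hh
    have hhpos : 0 < h := by positivity
    have hhd : h < d := lt_of_le_of_lt (min_le_left _ _) (by linarith)
    have hhe : h < ε := lt_of_le_of_lt (min_le_right _ _) (by linarith)
    have e1 : dist (ξ + h) ξ < ε := by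
      rw [Real.dist_eq, show ξ + h - ξ = h by ring, abs_of_nonneg hhpos.le]; exact hhe
    have e2 : dist (ξ - h) ξ < ε := by
      rw [Real.dist_eq, show ξ - h - ξ = -h by ring, abs_neg, abs_of_nonneg hhpos.le]; exact hhe
    have hp : f.eval ξ ≤ f.eval (ξ + h) := hball e1
    have hm : f.eval ξ ≤ f.eval (ξ - h) := hball e2
    have := key h hhpos hhd
    nlinarith [hp, hm, hpos]
end

section
/- Let f = t^n + a_1 t^{n−1} + ⋯ + a_n ∈ ℝ[t] be a monic hyperbolic polynomial of degree n. If a_i = a_{i+1} = 0 for some i with 1 ≤ i ≤ n − 1, then a_j = 0 for all j with i ≤ j ≤ n. -/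
open Polynomial

/-- The derivative of a real polynomial that splits also splits. -/
private lemma splits_derivative_aux {p : ℝ[X]} (hp : p.Splits) :
    p.derivative.Splits := by
  rcases eq_or_ne p.derivative 0 with h | h
  · rw [h]; exact Splits.zero
  have hn : p.natDegree ≠ 0 := by
    intro h0
    exact h (derivative_of_natDegree_zero h0)
  rw [splits_iff_card_roots] at hp ⊢
  have h1 := p.card_roots_le_derivative
  have h2 := p.derivative.card_roots'
  have h3 : p.derivative.natDegree ≤ p.natDegree - 1 := natDegree_derivative_le p
  omega

private lemma splits_iterate_derivative_aux {p : ℝ[X]} (hp : p.Splits) (k : ℕ) :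
    (derivative^[k] p).Splits := by
  induction k with
  | zero => exact hp
  | succ k ih => rw [Function.iterate_succ_apply']; exact splits_derivative_aux ih

/-- If a real polynomial splits and its derivative has a root of multiplicity ≥ 2 at `x`,
then `x` is a root of the polynomial. -/
private lemma isRoot_of_two_le_derivative_rootMultiplicity {p : ℝ[X]} (hp : p ≠ 0)
    (hs : p.Splits) {x : ℝ}
    (hm : 2 ≤ p.derivative.rootMultiplicity x) : p.IsRoot x := by
  by_contra hx
  have hd0 : p.derivative ≠ 0 := by
    intro h
    rw [h, rootMultiplicity_zero] at hm
    omega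
  classical
  set S := p.roots.toFinset with hS
  set T := p.derivative.roots.toFinset with hT
  have hcardP : Multiset.card p.roots = p.natDegree := (splits_iff_card_roots).1 hs
  have hcardP' : Multiset.card p.derivative.roots = p.derivative.natDegree :=
    (splits_iff_card_roots).1 (splits_derivative_aux hs)
  have hndeg : p.derivative.natDegree ≤ p.natDegree - 1 := natDegree_derivative_le p
  have hn1 : 1 ≤ p.natDegree := by
    by_contra hc
    push_neg at hc
    exact hd0 (derivative_of_natDegree_zero (by omega))
  -- x is a root of the derivative, not of p
  have hxT : x ∈ T := by
    rw [hT, Multiset.mem_toFinset, mem_roots hd0]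
    exact (rootMultiplicity_pos hd0).1 (by omega)
  have hxS : x ∉ S := by
    rw [hS, Multiset.mem_toFinset, mem_roots hp]
    exact hx
  -- Rolle-type inequality on numbers of distinct roots
  have hrolle : S.card ≤ (T \ S).card + 1 :=
    p.card_roots_toFinset_le_card_roots_derivative_diff_roots_succ
  -- Sum over S of derivative multiplicities
  have hA : p.natDegree ≤ (∑ a ∈ S, p.derivative.roots.count a) + S.card := by
    have : ∀ a ∈ S, p.roots.count a ≤ p.derivative.roots.count a + 1 := by
      intro a _
      rw [count_roots, count_roots]
      have := p.rootMultiplicity_sub_one_le_derivative_rootMultiplicity a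
      omega
    calc p.natDegree = ∑ a ∈ S, p.roots.count a := by
          rw [hS, Multiset.toFinset_sum_count_eq, hcardP]
      _ ≤ ∑ a ∈ S, (p.derivative.roots.count a + 1) := Finset.sum_le_sum this
      _ = (∑ a ∈ S, p.derivative.roots.count a) + S.card := by
          rw [Finset.sum_add_distrib, Finset.card_eq_sum_ones]
  -- the sum over S equals the sum over T ∩ S
  have hAeq : (∑ a ∈ S, p.derivative.roots.count a) =
      ∑ a ∈ T ∩ S, p.derivative.roots.count a := by
    refine (Finset.sum_subset (Finset.inter_subset_right) ?_).symm
    intro a _ haT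
    rw [Multiset.count_eq_zero]
    intro hmem
    exact haT (Finset.mem_inter.2 ⟨Multiset.mem_toFinset.2 hmem, ‹a ∈ S›⟩)
  -- sum over T \ S
  have hxTS : x ∈ T \ S := Finset.mem_sdiff.2 ⟨hxT, hxS⟩
  have hB : (T \ S).card + 1 ≤ ∑ b ∈ T \ S, p.derivative.roots.count b := by
    rw [← Finset.add_sum_erase _ _ hxTS]
    have hcx : 2 ≤ p.derivative.roots.count x := by rwa [count_roots]
    have : ((T \ S).erase x).card ≤ ∑ b ∈ (T \ S).erase x, p.derivative.roots.count b := by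
      rw [Finset.card_eq_sum_ones]
      refine Finset.sum_le_sum fun b hb => ?_
      rw [Nat.one_le_iff_ne_zero, ← Nat.pos_iff_ne_zero, Multiset.count_pos,
        ← Multiset.mem_toFinset]
      exact (Finset.mem_sdiff.1 (Finset.mem_of_mem_erase hb)).1
    have hce : ((T \ S).erase x).card = (T \ S).card - 1 := Finset.card_erase_of_mem hxTS
    have hpos : 0 < (T \ S).card := Finset.card_pos.2 ⟨x, hxTS⟩
    omega
  -- total count of derivative roots
  have htot : (∑ a ∈ T ∩ S, p.derivative.roots.count a) +
      (∑ b ∈ T \ S, p.derivative.roots.count b) = Multiset.card p.derivative.roots := by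
    rw [Finset.sum_inter_add_sum_sdiff, hT, Multiset.toFinset_sum_count_eq]
  omega

/-- Gaining multiplicity at 0 when integrating (going down the derivative tower). -/
private lemma rootMult_ge_of_iterate {k : ℕ} : ∀ {p : ℝ[X]}, p ≠ 0 →
    p.Splits → 2 ≤ (derivative^[k] p).rootMultiplicity 0 →
    k + 2 ≤ p.rootMultiplicity 0 := by
  induction k with
  | zero => intro p _ _ h; simpa using h
  | succ k ih =>
    intro p hp hs h
    rw [Function.iterate_succ_apply] at h
    have hd0 : p.derivative ≠ 0 := by
      intro h0
      rw [h0] at h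
      simp [Function.iterate_fixed, rootMultiplicity_zero] at h
    have hkey : k + 2 ≤ p.derivative.rootMultiplicity 0 :=
      ih hd0 (splits_derivative_aux hs) h
    have hroot : p.IsRoot 0 :=
      isRoot_of_two_le_derivative_rootMultiplicity hp hs (by omega)
    have := derivative_rootMultiplicity_of_root (p := p) (t := 0) hroot
    have hpos : 0 < p.rootMultiplicity 0 := (rootMultiplicity_pos hp).2 hroot
    omega

/-- For a monic hyperbolic polynomial `f = t^n + a_1 t^{n−1} + ⋯ + a_n` (so `a_i` is the
coefficient of `t^{n−i}`): if `a_i = a_{i+1} = 0` for some `1 ≤ i ≤ n − 1`, then `a_j = 0`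
for all `i ≤ j ≤ n`. -/
theorem consecutive_zero_coeffs (n : ℕ) (f : Polynomial ℝ)
    (hmonic : f.Monic) (hdeg : f.natDegree = n) (hsplit : (f.map (RingHom.id ℝ)).Splits)
    (i : ℕ) (hi1 : 1 ≤ i) (hi2 : i ≤ n - 1)
    (h1 : f.coeff (n - i) = 0) (h2 : f.coeff (n - (i + 1)) = 0) :
    ∀ j, i ≤ j → j ≤ n → f.coeff (n - j) = 0 := by
  have hn2 : 2 ≤ n := by omega
  have hin : i + 1 ≤ n := by omega
  set k := n - i - 1 with hk
  set g := derivative^[k] f with hg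
  have hf0 : f ≠ 0 := hmonic.ne_zero
  -- g is nonzero: its top coefficient is a nonzero multiple of f's leading coefficient
  have hgtop : g.coeff (i + 1) ≠ 0 := by
    rw [hg, coeff_iterate_derivative]
    have he : i + 1 + k = n := by omega
    rw [he]
    have : f.coeff n = 1 := by
      rw [← hdeg]; exact hmonic.coeff_natDegree
    rw [this, nsmul_eq_mul, mul_one]
    intro hc
    have : n.descFactorial k = 0 := by exact_mod_cast hc
    rw [Nat.descFactorial_eq_zero_iff_lt] at this
    omega
  have hg0 : g ≠ 0 := fun h => hgtop (by rw [h, coeff_zero])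
  -- g has a root of multiplicity ≥ 2 at 0
  have hgc0 : g.coeff 0 = 0 := by
    rw [hg, coeff_iterate_derivative]
    have he : 0 + k = n - (i + 1) := by omega
    rw [he, h2, smul_zero]
  have hgc1 : g.coeff 1 = 0 := by
    rw [hg, coeff_iterate_derivative]
    have he : 1 + k = n - i := by omega
    rw [he, h1, smul_zero]
  have hgm : 2 ≤ g.rootMultiplicity 0 := by
    rw [le_rootMultiplicity_iff hg0]
    simp only [map_zero, sub_zero]
    rw [X_pow_dvd_iff]
    intro d hd
    interval_cases d
    · exact hgc0
    · exact hgc1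
  -- hence f has multiplicity ≥ n - i + 1 at 0
  have hmf : k + 2 ≤ f.rootMultiplicity 0 := rootMult_ge_of_iterate hf0 (by rwa [Polynomial.map_id] at hsplit) hgm
  have hdvd : X ^ (k + 2) ∣ f := by
    have := (le_rootMultiplicity_iff hf0 (a := (0 : ℝ)) (n := k + 2)).1 hmf
    simpa using this
  intro j hj hjn
  exact X_pow_dvd_iff.1 hdvd _ (by omega)
end

section
/- Let f ∈ ℝ[t] be a monic hyperbolic polynomial of degree n having exactly k distinct roots, with k < n. Then for each s with 1 ≤ s ≤ k there exist a monic polynomial g ∈ ℝ[t] of degree n − s and a δ > 0 such that for all ε with 0 < ε < δ, both f + εg and f − εg are hyperbolic and have strictly more than k distinct real roots. -/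
open Polynomial

/-- separation of a finite set of reals -/
lemma exists_sep (T : Finset ℝ) : ∃ u : ℝ, 0 < u ∧ ∀ a ∈ T, ∀ b ∈ T, a ≠ b → 2 * u < |a - b| := by
  classical
  set P : Finset ℝ := T.offDiag.image (fun p => |p.1 - p.2|) with hP
  by_cases hPe : P.Nonempty
  · refine ⟨P.min' hPe / 3, ?_, ?_⟩
    · have : ∀ x ∈ P, 0 < x := by
        intro x hx
        simp only [hP, Finset.mem_image, Finset.mem_offDiag] at hx
        obtain ⟨⟨a,b⟩, ⟨ha, hb, hab⟩, rfl⟩ := hx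
        exact abs_pos.mpr (sub_ne_zero.mpr hab)
      have := this _ (P.min'_mem hPe)
      linarith
    · intro a ha b hb hab
      have hmem : |a - b| ∈ P := by
        simp only [hP, Finset.mem_image, Finset.mem_offDiag]
        exact ⟨(a,b), ⟨ha, hb, hab⟩, rfl⟩
      have h1 := P.min'_le _ hmem
      have h2 : 0 < P.min' hPe := by
        have : ∀ x ∈ P, 0 < x := by
          intro x hx
          simp only [hP, Finset.mem_image, Finset.mem_offDiag] at hx
          obtain ⟨⟨c,d⟩, ⟨hc, hd, hcd⟩, rfl⟩ := hx
          exact abs_pos.mpr (sub_ne_zero.mpr hcd)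
        exact this _ (P.min'_mem hPe)
      linarith
  · refine ⟨1, one_pos, fun a ha b hb hab => ?_⟩
    exfalso
    apply hPe
    refine ⟨|a - b|, ?_⟩
    simp only [hP, Finset.mem_image, Finset.mem_offDiag]
    exact ⟨(a,b), ⟨ha, hb, hab⟩, rfl⟩

/-- IVT for polynomials: opposite signs at endpoints give a root strictly between. -/
lemma poly_root_between (p : Polynomial ℝ) {a b : ℝ} (hab : a < b)
    (h : p.eval a * p.eval b < 0) : ∃ x ∈ Set.Ioo a b, p.eval x = 0 := by
  have hc : ContinuousOn (fun x => p.eval x) (Set.Icc a b) := (p.continuous).continuousOn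
  rcases lt_or_ge (p.eval a) 0 with ha | ha
  · have hb : 0 < p.eval b := by nlinarith
    have := intermediate_value_Ioo hab.le hc (a := a) (b := b)
    have h0 : (0:ℝ) ∈ Set.Ioo (p.eval a) (p.eval b) := ⟨ha, hb⟩
    obtain ⟨x, hx, hx0⟩ := this h0
    exact ⟨x, hx, hx0⟩
  · have ha' : 0 < p.eval a := by
      rcases ha.lt_or_eq with h1 | h1
      · exact h1
      · exfalso; rw [← h1] at h; simp at h
    have hb : p.eval b < 0 := by nlinarith
    have := intermediate_value_Ioo' hab.le hc (a := a) (b := b)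
    have h0 : (0:ℝ) ∈ Set.Ioo (p.eval b) (p.eval a) := ⟨hb, ha'⟩
    obtain ⟨x, hx, hx0⟩ := this h0
    exact ⟨x, hx, hx0⟩

lemma sign_pres {v η : ℝ} (h : |η| < |v|) : 0 < (v + η) * v := by
  rcases abs_lt.mp h with ⟨h1, h2⟩
  rcases lt_trichotomy v 0 with hv | hv | hv
  · rw [abs_of_neg hv] at h1 h2; nlinarith
  · exfalso; rw [hv, abs_zero] at h
    exact absurd h (abs_nonneg η).not_gt
  · rw [abs_of_pos hv] at h1 h2; nlinarith
open Polynomial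

lemma eval_prod_lin (S : Finset ℝ) (x : ℝ) :
    ((S.val.map (fun b => X - C b)).prod).eval x = ∏ b ∈ S, (x - b) := by
  rw [eval_multiset_prod, Multiset.map_map, Finset.prod]
  congr 1
  apply Multiset.map_congr rfl
  intro b _
  simp

lemma endpoint_sign (S : Finset ℝ) {a u : ℝ} (ha : a ∈ S) (hu : 0 < u)
    (hsep : ∀ b ∈ S, b ≠ a → 2 * u < |a - b|) :
    ((S.val.map (fun b => X - C b)).prod).eval (a - u) *
      ((S.val.map (fun b => X - C b)).prod).eval (a + u) < 0 := by
  classical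
  rw [eval_prod_lin, eval_prod_lin, ← Finset.prod_mul_distrib]
  rw [← Finset.mul_prod_erase S _ ha]
  have hneg : (a - u - a) * (a + u - a) < 0 := by nlinarith
  have hpos : 0 < ∏ b ∈ S.erase a, (a - u - b) * (a + u - b) := by
    apply Finset.prod_pos
    intro b hb
    have hbS := Finset.mem_of_mem_erase hb
    have hbne := Finset.ne_of_mem_erase hb
    have h1 := hsep b hbS hbne
    have h2 : (2*u)^2 < |a-b|^2 := by nlinarith [abs_nonneg (a-b)]
    rw [sq_abs] at h2
    nlinarith
  nlinarith

lemma perturbed_poly (S : Finset ℝ) (hS : S.Nonempty) {u : ℝ} (hu : 0 < u)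
    (hsep : ∀ a ∈ S, ∀ b ∈ S, a ≠ b → 2 * u < |a - b|)
    {η : ℝ} (hη0 : η ≠ 0)
    (hηs : ∀ a ∈ S, |η| < |((S.val.map (fun b => X - C b)).prod).eval (a - u)| ∧
                    |η| < |((S.val.map (fun b => X - C b)).prod).eval (a + u)|) :
    ((S.val.map (fun b => X - C b)).prod + C η).Splits ∧
    ((S.val.map (fun b => X - C b)).prod + C η).roots.toFinset.card = S.card ∧
    ∀ x ∈ ((S.val.map (fun b => X - C b)).prod + C η).roots,
      ∃ a ∈ S, x ∈ Set.Ioo (a - u) (a + u) ∧ x ≠ a := by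
  classical
  set h : Polynomial ℝ := (S.val.map (fun b => X - C b)).prod with hh
  have hhm : h.Monic := monic_multiset_prod_of_monic _ _ (fun b _ => monic_X_sub_C b)
  have hhd : h.natDegree = S.card := by
    rw [hh, natDegree_multiset_prod_X_sub_C_eq_card]; rfl
  have hdpos : 0 < h.natDegree := by rw [hhd]; exact hS.card_pos
  set p : Polynomial ℝ := h + C η with hp
  have hpm : p.Monic := by
    apply hhm.add_of_left
    calc (C η).degree ≤ 0 := degree_C_le
      _ < h.degree := natDegree_pos_iff_degree_pos.mp hdpos
  have hpd : p.natDegree = S.card := by rw [hp, natDegree_add_C, hhd]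
  have hp0 : p ≠ 0 := hpm.ne_zero
  -- root in each interval
  have H : ∀ a ∈ S, ∃ x, x ∈ Set.Ioo (a - u) (a + u) ∧ p.eval x = 0 := by
    intro a ha
    have hsign := endpoint_sign S ha hu (fun b hb hba => hsep a ha b hb (Ne.symm hba))
    obtain ⟨hδ1, hδ2⟩ := hηs a ha
    have s1 := sign_pres (v := h.eval (a - u)) hδ1
    have s2 := sign_pres (v := h.eval (a + u)) hδ2
    have hsign' : p.eval (a - u) * p.eval (a + u) < 0 := by
      have e1 : p.eval (a - u) = h.eval (a - u) + η := by simp [hp]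
      have e2 : p.eval (a + u) = h.eval (a + u) + η := by simp [hp]
      rw [e1, e2]
      nlinarith
    obtain ⟨x, hx, hx0⟩ := poly_root_between p (by linarith) hsign'
    exact ⟨x, hx, hx0⟩
  choose! ρ hρ1 hρ2 using H
  have hinj : Set.InjOn ρ S := by
    intro a ha a' ha' he
    by_contra hne
    have h1 := hρ1 a ha
    have h2 := hρ1 a' ha'
    rw [he] at h1
    obtain ⟨l1, r1⟩ := h1
    obtain ⟨l2, r2⟩ := h2
    have := hsep a ha a' ha' hne
    have : |a - a'| < 2 * u := abs_lt.mpr ⟨by linarith, by linarith⟩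
    linarith [hsep a ha a' ha' hne]
  have hmaps : ∀ a ∈ S, ρ a ∈ p.roots.toFinset := by
    intro a ha
    rw [Multiset.mem_toFinset, mem_roots hp0]
    exact hρ2 a ha
  have hcard1 : S.card ≤ p.roots.toFinset.card :=
    Finset.card_le_card_of_injOn ρ hmaps hinj
  have hcard2 : p.roots.toFinset.card ≤ Multiset.card p.roots := Multiset.toFinset_card_le _
  have hcard3 : Multiset.card p.roots ≤ S.card := hpd ▸ p.card_roots'
  have hcards : p.roots.toFinset.card = S.card := le_antisymm (hcard2.trans hcard3) hcard1
  have hrc : Multiset.card p.roots = p.natDegree :=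
    le_antisymm (p.card_roots') (by rw [hpd]; exact hcard1.trans hcard2)
  have hsplits : p.Splits := (splits_iff_card_roots).mpr hrc
  have himg : p.roots.toFinset = S.image ρ := by
    apply (Finset.eq_of_subset_of_card_le (Finset.image_subset_iff.mpr hmaps) ?_).symm
    rw [Finset.card_image_of_injOn hinj, hcards]
  refine ⟨hsplits, hcards, ?_⟩
  intro x hx
  have : x ∈ p.roots.toFinset := Multiset.mem_toFinset.mpr hx
  rw [himg, Finset.mem_image] at this
  obtain ⟨a, ha, rfl⟩ := this
  refine ⟨a, ha, hρ1 a ha, ?_⟩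
  intro hxa
  have hevalh : h.eval (ρ a) = -η := by
    have := hρ2 a ha
    simp only [hp, eval_add, eval_C] at this
    linarith
  have hza : h.eval a = 0 := by
    rw [eval_prod_lin]
    exact Finset.prod_eq_zero ha (sub_self a)
  rw [hxa, hza] at hevalh
  exact hη0 (by linarith)

/-- **Perturbation towards more distinct roots.** Let `f` be a monic hyperbolic polynomial of
degree `n` with exactly `k < n` distinct roots. For each `1 ≤ s ≤ k` there are a monic
polynomial `g` of degree `n − s` and `δ > 0` such that for all `0 < ε < δ` the polynomials
`f + εg` and `f − εg` are hyperbolic with strictly more than `k` distinct real roots. -/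
theorem perturb_to_more_distinct_roots (n k : ℕ) (f : Polynomial ℝ)
    (hmonic : f.Monic) (hdeg : f.natDegree = n) (hsplit : f.Splits)
    (hk : f.roots.toFinset.card = k) (hkn : k < n)
    (s : ℕ) (hs1 : 1 ≤ s) (hs2 : s ≤ k) :
    ∃ g : Polynomial ℝ, g.Monic ∧ g.natDegree = n - s ∧
      ∃ δ > 0, ∀ ε : ℝ, 0 < ε → ε < δ →
        ((f + Polynomial.C ε * g).Splits ∧
          k < (f + Polynomial.C ε * g).roots.toFinset.card) ∧
        ((f - Polynomial.C ε * g).Splits ∧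
          k < (f - Polynomial.C ε * g).roots.toFinset.card) := by
  classical
  set R := f.roots with hR
  have hRcard : Multiset.card R = n := by
    rw [hR, (splits_iff_card_roots).mp hsplit, hdeg]
  set T := R.toFinset with hT
  have hTcard : T.card = k := hk
  -- find a multiple root
  have hmult : ∃ r ∈ T, 1 < R.count r := by
    by_contra hcon
    push_neg at hcon
    have hnd : R.Nodup := by
      rw [Multiset.nodup_iff_count_le_one]
      intro a
      by_cases haT : a ∈ T
      · exact hcon a haT
      · have : a ∉ R := fun hm => haT (Multiset.mem_toFinset.mpr hm)
        simp [Multiset.count_eq_zero_of_notMem this]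
    have hTR : T.card = Multiset.card R := Multiset.toFinset_card_of_nodup hnd
    omega
  obtain ⟨r, hrT, hrcount⟩ := hmult
  -- choose S of size s containing r
  obtain ⟨S, hrS, hST, hScard⟩ :=
    Finset.exists_subsuperset_card_eq (Finset.singleton_subset_iff.mpr hrT)
      (by simpa using hs1) (by rw [hTcard]; exact hs2)
  have hrS' : r ∈ S := hrS (Finset.mem_singleton_self r)
  have hSne : S.Nonempty := ⟨r, hrS'⟩
  have hSval : S.val ≤ R := by
    rw [Multiset.le_iff_count]
    intro a
    by_cases haS : a ∈ S
    · have h1 : S.val.count a = 1 := Multiset.count_eq_one_of_mem S.nodup haS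
      have h2 : 1 ≤ R.count a :=
        Multiset.one_le_count_iff_mem.mpr (Multiset.mem_toFinset.mp (hST haS))
      omega
    · have : a ∉ S.val := haS
      simp [Multiset.count_eq_zero_of_notMem this]
  set M := R - S.val with hM
  set g := (M.map (fun a => X - C a)).prod with hg
  set h := (S.val.map (fun a => X - C a)).prod with hhdef
  have hgm : g.Monic := monic_multiset_prod_of_monic _ _ (fun b _ => monic_X_sub_C b)
  have hMcard : Multiset.card M = n - s := by
    rw [hM, Multiset.card_sub hSval, hRcard, show Multiset.card S.val = s from hScard]
  have hgd : g.natDegree = n - s := by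
    rw [hg, natDegree_multiset_prod_X_sub_C_eq_card, hMcard]
  have hgroots : g.roots = M := roots_multiset_prod_X_sub_C M
  have hgsplits : g.Splits := by
    rw [splits_iff_card_roots, hgroots, hgd, hMcard]
  have hg0 : g ≠ 0 := hgm.ne_zero
  have hfe : f = g * h := by
    have hMS : M + S.val = R := tsub_add_cancel_of_le hSval
    conv_lhs => rw [hsplit.eq_prod_roots_of_monic hmonic]
    rw [hg, hhdef, show f.roots = R from rfl, ← hMS, Multiset.map_add, Multiset.prod_add]
  -- separation
  obtain ⟨u, hu, husep⟩ := exists_sep T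
  have hSsep : ∀ a ∈ S, ∀ b ∈ S, a ≠ b → 2 * u < |a - b| :=
    fun a ha b hb hab => husep a (hST ha) b (hST hb) hab
  -- endpoints nonzero
  have hend : ∀ a ∈ S, h.eval (a - u) ≠ 0 ∧ h.eval (a + u) ≠ 0 := by
    intro a ha
    have := endpoint_sign S ha hu (fun b hb hba => hSsep a ha b hb (Ne.symm hba))
    rw [← hhdef] at this
    constructor
    · intro hz; rw [hz] at this; simp at this
    · intro hz; rw [hz] at this; simp at this
  set δ : ℝ := S.inf' hSne (fun a => min |h.eval (a - u)| |h.eval (a + u)|) with hδdef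
  have hδpos : 0 < δ := by
    rw [hδdef, Finset.lt_inf'_iff]
    intro a ha
    obtain ⟨h1, h2⟩ := hend a ha
    exact lt_min (abs_pos.mpr h1) (abs_pos.mpr h2)
  -- main claim for any nonzero small η
  have key : ∀ η : ℝ, η ≠ 0 → |η| < δ →
      (f + C η * g).Splits ∧ k < (f + C η * g).roots.toFinset.card := by
    intro η hη0 hηδ
    have hηs : ∀ a ∈ S, |η| < |h.eval (a - u)| ∧ |η| < |h.eval (a + u)| := by
      intro a ha
      have hle : δ ≤ min |h.eval (a - u)| |h.eval (a + u)| :=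
        Finset.inf'_le _ ha
      exact ⟨lt_of_lt_of_le hηδ (hle.trans (min_le_left _ _)),
             lt_of_lt_of_le hηδ (hle.trans (min_le_right _ _))⟩
    obtain ⟨hsp, hcards, hloc⟩ := perturbed_poly S hSne hu hSsep hη0 (by rw [← hhdef]; exact hηs)
    rw [← hhdef] at hsp hcards hloc
    set p : Polynomial ℝ := h + C η with hpdef
    have hp0 : p ≠ 0 := by
      intro hz
      rw [hz, roots_zero] at hcards
      simp only [Multiset.toFinset_zero, Finset.card_empty] at hcards
      rw [hScard] at hcards
      omega
    have heq : f + C η * g = g * p := by rw [hfe, hpdef]; ring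
    have hroots : (f + C η * g).roots = g.roots + p.roots := by
      rw [heq, roots_mul (mul_ne_zero hg0 hp0)]
    constructor
    · rw [heq]; exact hgsplits.mul hsp
    · rw [hroots, Multiset.toFinset_add]
      have hdisj : Disjoint g.roots.toFinset p.roots.toFinset := by
        rw [Finset.disjoint_right]
        intro x hxp hxg
        obtain ⟨a, haS, hxIoo, hxa⟩ := hloc x (Multiset.mem_toFinset.mp hxp)
        have hxR : x ∈ R := by
          have hxM : x ∈ M := by rw [← hgroots]; exact Multiset.mem_toFinset.mp hxg
          exact Multiset.mem_of_le tsub_le_self hxM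
        have hxT : x ∈ T := Multiset.mem_toFinset.mpr hxR
        obtain ⟨l, rr⟩ := hxIoo
        have habs : |a - x| < 2 * u := abs_lt.mpr ⟨by linarith, by linarith⟩
        linarith [husep a (hST haS) x hxT (Ne.symm hxa)]
      rw [Finset.card_union_of_disjoint hdisj]
      have hsub : insert r (T \ S) ⊆ g.roots.toFinset := by
        intro b hb
        rw [hgroots, Multiset.mem_toFinset]
        rcases Finset.mem_insert.mp hb with rfl | hb'
        · rw [← Multiset.count_pos, hM, Multiset.count_sub]
          have : S.val.count b ≤ 1 := Multiset.nodup_iff_count_le_one.mp S.nodup b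
          omega
        · obtain ⟨hbT, hbS⟩ := Finset.mem_sdiff.mp hb'
          rw [← Multiset.count_pos, hM, Multiset.count_sub]
          have h1 : 1 ≤ R.count b :=
            Multiset.one_le_count_iff_mem.mpr (Multiset.mem_toFinset.mp hbT)
          have h0 : S.val.count b = 0 := Multiset.count_eq_zero_of_notMem hbS
          omega
      have hcard_ins : (insert r (T \ S)).card = k - s + 1 := by
        rw [Finset.card_insert_of_notMem (by simp [hrS']), Finset.card_sdiff_of_subset hST, hTcard, hScard]
      have hA : k - s + 1 ≤ g.roots.toFinset.card := hcard_ins ▸ Finset.card_le_card hsub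
      rw [hcards, hScard]
      omega
  refine ⟨g, hgm, hgd, δ, hδpos, ?_⟩
  intro ε hε1 hε2
  have k1 := key ε (ne_of_gt hε1) (by rwa [abs_of_pos hε1])
  have k2 := key (-ε) (neg_ne_zero.mpr (ne_of_gt hε1)) (by rwa [abs_neg, abs_of_pos hε1])
  rw [map_neg, neg_mul, ← sub_eq_add_neg] at k2
  exact ⟨k1, k2⟩
end

section
/- Let f = t^n + a_1 t^{n−1} + ⋯ + a_n ∈ ℝ[t] be a monic hyperbolic polynomial of degree n all of whose roots are nonnegative. If a_{n−i} = 0 for some i with 0 ≤ i ≤ n − 1, then a_{n−j} = 0 for all j with 0 ≤ j ≤ i; equivalently, 0 is a root of f of multiplicity at least i + 1. -/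
open Polynomial Multiset

lemma multiset_prod_nonneg (s : Multiset ℝ) (h : ∀ x ∈ s, 0 ≤ x) : 0 ≤ s.prod := by
  induction s using Multiset.induction with
  | empty => simp
  | cons a t ih =>
    rw [Multiset.prod_cons]
    exact mul_nonneg (h a (Multiset.mem_cons_self a t))
      (ih fun x hx => h x (Multiset.mem_cons_of_mem hx))

lemma multiset_prod_pos (s : Multiset ℝ) (h : ∀ x ∈ s, 0 < x) : 0 < s.prod := by
  induction s using Multiset.induction with
  | empty => simp
  | cons a t ih =>
    rw [Multiset.prod_cons]
    exact mul_pos (h a (Multiset.mem_cons_self a t))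
      (ih fun x hx => h x (Multiset.mem_cons_of_mem hx))

lemma multiset_single_le_sum (s : Multiset ℝ) (h : ∀ x ∈ s, 0 ≤ x) {a : ℝ} (ha : a ∈ s) :
    a ≤ s.sum := by
  obtain ⟨t, rfl⟩ := Multiset.exists_cons_of_mem ha
  rw [Multiset.sum_cons]
  have : 0 ≤ t.sum :=
    Multiset.sum_nonneg fun x hx => h x (Multiset.mem_cons_of_mem hx)
  linarith

/-- Let `f = t^n + a_1 t^{n−1} + ⋯ + a_n` be a monic hyperbolic polynomial all of whose roots
are nonnegative (here `a_{n−i}` is the coefficient of `t^i`). If `a_{n−i} = 0` for some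
`0 ≤ i ≤ n − 1`, then `a_{n−j} = 0` for all `0 ≤ j ≤ i`; equivalently `0` is a root of `f`
of multiplicity at least `i + 1`. -/
theorem nonneg_roots_vanishing_coeffs (n : ℕ) (f : Polynomial ℝ)
    (hmonic : f.Monic) (hdeg : f.natDegree = n) (hsplit : (f.map (RingHom.id ℝ)).Splits)
    (hroots : ∀ x ∈ f.roots, 0 ≤ x)
    (i : ℕ) (hi : i + 1 ≤ n) (h : f.coeff i = 0) :
    (∀ j ≤ i, f.coeff j = 0) ∧ i + 1 ≤ Polynomial.rootMultiplicity 0 f := by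
  classical
  rw [Polynomial.map_id] at hsplit
  have hf0 : f ≠ 0 := hmonic.ne_zero
  have hcard : Multiset.card f.roots = n := by
    rw [(splits_iff_card_roots).1 hsplit, hdeg]
  have hin : i ≤ f.natDegree := by omega
  -- coefficient as elementary symmetric polynomial
  have hesymm : f.roots.esymm (f.natDegree - i) = 0 := by
    have := Polynomial.coeff_eq_esymm_roots_of_splits hsplit hin
    rw [hmonic.leadingCoeff, one_mul, h] at this
    have hne : ((-1 : ℝ)) ^ (f.natDegree - i) ≠ 0 := by
      simp
    exact by
      rcases mul_eq_zero.mp this.symm with h1 | h1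
      · exact absurd h1 hne
      · exact h1
  set k := n - i with hk
  have hkd : f.natDegree - i = k := by rw [hdeg]
  rw [hkd] at hesymm
  -- main claim: multiplicity of 0 is at least i+1
  have hmult : i + 1 ≤ f.roots.count 0 := by
    by_contra hc
    push_neg at hc
    have hc' : f.roots.count 0 ≤ i := by omega
    set s' := f.roots.filter (fun x => 0 < x) with hs'
    have hfilter : f.roots.filter (fun x => ¬ 0 < x) = f.roots.filter (fun x => 0 = x) := by
      apply Multiset.filter_congr
      intro x hx
      have := hroots x hx
      constructor
      · intro hnx; linarith
      · intro he; linarith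
    have hcount : Multiset.card (f.roots.filter (fun x => ¬ 0 < x)) = f.roots.count 0 := by
      rw [hfilter, Multiset.count_eq_card_filter_eq]
    have hcards' : k ≤ Multiset.card s' := by
      have := Multiset.filter_add_not (fun x => 0 < x) f.roots
      have hadd : Multiset.card s' + Multiset.card (f.roots.filter (fun x => ¬ 0 < x))
          = Multiset.card f.roots := by
        rw [← Multiset.card_add, this]
      omega
    -- extract a sub-multiset of positive reals of size k
    have hne : (s'.powersetCard k) ≠ 0 := by
      intro h0
      have := Multiset.card_powersetCard k s'
      rw [h0] at this
      simp only [Multiset.card_zero] at this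
      exact (Nat.choose_pos hcards').ne' this.symm
    obtain ⟨t, ht⟩ := Multiset.exists_mem_of_ne_zero hne
    rw [Multiset.mem_powersetCard] at ht
    have htpos : 0 < t.prod := multiset_prod_pos t fun x hx =>
      Multiset.of_mem_filter (Multiset.mem_of_le ht.1 hx)
    have htmem : t.prod ∈ (f.roots.powersetCard k).map Multiset.prod := by
      apply Multiset.mem_map_of_mem
      rw [Multiset.mem_powersetCard]
      exact ⟨le_trans ht.1 (Multiset.filter_le _ _), ht.2⟩
    have hnonneg : ∀ x ∈ (f.roots.powersetCard k).map Multiset.prod, 0 ≤ x := by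
      intro x hx
      obtain ⟨u, hu, rfl⟩ := Multiset.mem_map.mp hx
      rw [Multiset.mem_powersetCard] at hu
      exact multiset_prod_nonneg u fun y hy => hroots y (Multiset.mem_of_le hu.1 hy)
    have hle := multiset_single_le_sum _ hnonneg htmem
    rw [show ((f.roots.powersetCard k).map Multiset.prod).sum = f.roots.esymm k from rfl,
      hesymm] at hle
    linarith
  rw [Polynomial.count_roots] at hmult
  refine ⟨?_, hmult⟩
  intro j hj
  have hdvd : X ^ (i + 1) ∣ f := by
    have := (Polynomial.le_rootMultiplicity_iff hf0 (a := 0) (n := i + 1)).mp hmult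
    simpa using this
  exact Polynomial.X_pow_dvd_iff.mp hdvd j (by omega)
end

section
/- For every n ≥ 1, every s with 2 ≤ s ≤ n, and all fixed a_1,…,a_s ∈ ℝ, the set H_s(a_1,…,a_s) := {z ∈ ℝⁿ : z_1 = a_1, …, z_s = a_s, and the polynomial t^n − z_1 t^{n−1} + z_2 t^{n−2} − ⋯ + (−1)^n z_n is hyperbolic} is a compact subset of ℝⁿ. -/
/-- The monic polynomial `t^n − z_1 t^{n−1} + z_2 t^{n−2} − ⋯ + (−1)^n z_n` associated to
`z ∈ ℝⁿ` (the coordinate `z i` playing the role of `z_{i+1}` for `i : Fin n`). -/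
noncomputable def polyOfCoeffs (n : ℕ) (z : Fin n → ℝ) : Polynomial ℝ :=
  Polynomial.X ^ n +
    ∑ i : Fin n, Polynomial.C ((-1) ^ ((i : ℕ) + 1) * z i) * Polynomial.X ^ (n - ((i : ℕ) + 1))

open Polynomial Finset

namespace HsAux

/-- The elementary symmetric functions map. -/
noncomputable def E (n : ℕ) (r : Fin n → ℝ) : Fin n → ℝ :=
  fun i => ∑ t ∈ Finset.univ.powersetCard ((i : ℕ) + 1), ∏ j ∈ t, r j

lemma continuous_E (n : ℕ) : Continuous (E n) := by
  refine continuous_pi fun i => ?_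
  exact continuous_finset_sum _ fun t _ =>
    continuous_finset_prod _ fun j _ => continuous_apply j

lemma coeff_polyOfCoeffs (n : ℕ) (z : Fin n → ℝ) (k : ℕ) :
    (polyOfCoeffs n z).coeff k =
      (if k = n then 1 else 0) +
        ∑ i : Fin n, (if n - ((i : ℕ) + 1) = k then (-1) ^ ((i : ℕ) + 1) * z i else 0) := by
  simp only [polyOfCoeffs, coeff_add, coeff_X_pow, finset_sum_coeff, coeff_C_mul, coeff_X_pow,
    mul_ite, mul_one, mul_zero]
  congr 1
  · simp [eq_comm]

lemma coeff_polyOfCoeffs_at (n : ℕ) (z : Fin n → ℝ) (i : Fin n) :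
    (polyOfCoeffs n z).coeff (n - ((i : ℕ) + 1)) = (-1) ^ ((i : ℕ) + 1) * z i := by
  have hi := i.isLt
  rw [coeff_polyOfCoeffs]
  rw [if_neg (by omega)]
  rw [Finset.sum_eq_single i]
  · simp
  · intro j _ hj
    have hj' := j.isLt
    rw [if_neg]
    intro h
    exact hj (Fin.ext (by omega))
  · intro h; exact absurd (Finset.mem_univ i) h

lemma polyOfCoeffs_injective (n : ℕ) {z z' : Fin n → ℝ}
    (h : polyOfCoeffs n z = polyOfCoeffs n z') : z = z' := by
  funext i
  have := congrArg (fun p => Polynomial.coeff p (n - ((i : ℕ) + 1))) h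
  simp only [coeff_polyOfCoeffs_at] at this
  have hne : ((-1 : ℝ)) ^ ((i : ℕ) + 1) ≠ 0 := by
    simp
  exact mul_left_cancel₀ hne this

lemma polyOfCoeffs_E (n : ℕ) (r : Fin n → ℝ) :
    polyOfCoeffs n (E n r) = ∏ j : Fin n, (X - C (r j)) := by
  have hcard : Multiset.card (Multiset.map r (Finset.univ : Finset (Fin n)).val) = n := by
    simp
  have hprod : (∏ j : Fin n, (X - C (r j))) =
      ((Multiset.map r (Finset.univ : Finset (Fin n)).val).map fun t => X - C t).prod := by
    rw [Multiset.map_map]; rfl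
  ext k
  rcases lt_trichotomy k n with hk | hk | hk
  · rw [coeff_polyOfCoeffs, hprod, Multiset.prod_X_sub_C_coeff _ (by omega), hcard,
      Finset.esymm_map_val]
    rw [if_neg (by omega)]
    rw [Finset.sum_eq_single (⟨n - 1 - k, by omega⟩ : Fin n)]
    · rw [if_pos (by simp; omega)]
      simp only [E]
      have : (n - 1 - k) + 1 = n - k := by omega
      rw [this, zero_add]
    · intro j _ hj
      have hj' := j.isLt
      rw [if_neg]
      intro h
      exact hj (Fin.ext (by simp at h ⊢; omega))
    · intro h; exact absurd (Finset.mem_univ _) h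
  · subst hk
    rw [coeff_polyOfCoeffs, hprod, Multiset.prod_X_sub_C_coeff _ (le_of_eq hcard.symm), hcard]
    rw [Nat.sub_self, if_pos rfl, Finset.sum_eq_zero]
    · simp [Multiset.esymm, Multiset.powersetCard_zero_left]
    · intro i _
      have := i.isLt
      rw [if_neg (by omega)]
  · have hdeg : (∏ j : Fin n, (X - C (r j))).natDegree = n := by
      rw [natDegree_prod_of_monic _ _ (fun j _ => monic_X_sub_C _)]
      simp
    rw [coeff_polyOfCoeffs, coeff_eq_zero_of_natDegree_lt (by omega : (∏ j : Fin n, (X - C (r j))).natDegree < k)]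
    rw [if_neg (by omega)]
    rw [Finset.sum_eq_zero]
    · ring
    · intro i _
      have := i.isLt
      rw [if_neg (by omega)]

lemma monic_polyOfCoeffs (n : ℕ) (hn : 1 ≤ n) (z : Fin n → ℝ) :
    (polyOfCoeffs n z).Monic := by
  have hq : (∑ i : Fin n, C ((-1) ^ ((i : ℕ) + 1) * z i) * X ^ (n - ((i : ℕ) + 1))).degree <
      (X ^ n : ℝ[X]).degree := by
    rw [degree_X_pow]
    refine lt_of_le_of_lt (degree_sum_le _ _) ?_
    rw [Finset.sup_lt_iff (by exact_mod_cast WithBot.bot_lt_coe n)]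
    intro i _
    refine lt_of_le_of_lt (degree_C_mul_X_pow_le _ _) ?_
    have hi := i.isLt
    exact_mod_cast (show ((n - ((i:ℕ)+1) : ℕ) : WithBot ℕ) < ((n : ℕ) : WithBot ℕ) from
      Nat.cast_lt.mpr (by omega))
  exact (monic_X_pow n).add_of_left hq

lemma natDegree_polyOfCoeffs (n : ℕ) (hn : 1 ≤ n) (z : Fin n → ℝ) :
    (polyOfCoeffs n z).natDegree = n := by
  have h := coeff_polyOfCoeffs n z n
  have hne : (polyOfCoeffs n z).coeff n ≠ 0 := by
    rw [h, if_pos rfl, Finset.sum_eq_zero]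
    · simp
    · intro i _; have := i.isLt; rw [if_neg (by omega)]
  have h1 : n ≤ (polyOfCoeffs n z).natDegree := le_natDegree_of_ne_zero hne
  have h2 : (polyOfCoeffs n z).natDegree ≤ n := by
    refine natDegree_le_iff_coeff_eq_zero.mpr fun k hk => ?_
    rw [coeff_polyOfCoeffs, if_neg (by omega), Finset.sum_eq_zero]
    · ring
    · intro i _; have := i.isLt; rw [if_neg (by omega)]
  omega

lemma exists_fn (n : ℕ) (m : Multiset ℝ) (h : Multiset.card m = n) :
    ∃ r : Fin n → ℝ, Multiset.map r (Finset.univ : Finset (Fin n)).val = m := by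
  have hl : m.toList.length = n := by simp [h]
  refine ⟨fun i => m.toList.get (Fin.cast hl.symm i), ?_⟩
  have h1 : (Finset.univ : Finset (Fin n)).val = ↑(List.finRange n) := rfl
  rw [h1, Multiset.map_coe]
  rw [← List.ofFn_eq_map]
  rw [← List.ofFn_congr hl m.toList.get, List.ofFn_get, Multiset.coe_toList]

lemma splits_polyOfCoeffs_iff (n : ℕ) (hn : 1 ≤ n) (z : Fin n → ℝ) :
    (polyOfCoeffs n z).Splits ↔ ∃ r : Fin n → ℝ, z = E n r := by
  constructor
  · intro hs
    have hmon := monic_polyOfCoeffs n hn z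
    have hcard : Multiset.card (polyOfCoeffs n z).roots = n := by
      rw [splits_iff_card_roots.mp hs, natDegree_polyOfCoeffs n hn z]
    obtain ⟨r, hr⟩ := exists_fn n (polyOfCoeffs n z).roots hcard
    have heq : polyOfCoeffs n z = polyOfCoeffs n (E n r) := by
      rw [polyOfCoeffs_E]
      have := hs.eq_prod_roots_of_monic hmon
      rw [this, ← hr, Multiset.map_map]
      rfl
    exact ⟨r, polyOfCoeffs_injective n heq⟩
  · rintro ⟨r, rfl⟩
    rw [polyOfCoeffs_E]
    exact Splits.prod fun j _ => Splits.X_sub_C _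

lemma sq_sum_eq {α : Type*} [DecidableEq α] (s : Finset α) (r : α → ℝ) :
    (∑ i ∈ s, r i) ^ 2 =
      ∑ i ∈ s, (r i) ^ 2 + 2 * ∑ t ∈ s.powersetCard 2, ∏ j ∈ t, r j := by
  induction s using Finset.induction_on with
  | empty =>
    have he : (∅ : Finset α).powersetCard 2 = ∅ := Finset.powersetCard_eq_empty.mpr (by simp)
    simp [he]
  | insert x s ha ih =>
    rw [Finset.sum_insert ha, Finset.sum_insert ha]
    have h2 : (2 : ℕ) = Nat.succ 1 := rfl
    rw [show (2:ℕ) = Nat.succ 1 from rfl, Finset.powersetCard_succ_insert ha]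
    have hdisj : Disjoint (Finset.powersetCard (Nat.succ 1) s)
        ((Finset.powersetCard 1 s).image (insert x)) := by
      rw [Finset.disjoint_right]
      intro t ht ht'
      obtain ⟨u, hu, rfl⟩ := Finset.mem_image.mp ht
      have hxt : x ∈ insert x u := Finset.mem_insert_self _ _
      have := Finset.mem_powersetCard.mp ht'
      exact ha (this.1 hxt)
    rw [Finset.sum_union hdisj]
    have hinj : ∀ u ∈ Finset.powersetCard 1 s, ∀ v ∈ Finset.powersetCard 1 s,
        insert x u = insert x v → u = v := by
      intro u hu v hv huv
      have hxu : x ∉ u := fun h => ha ((Finset.mem_powersetCard.mp hu).1 h)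
      have hxv : x ∉ v := fun h => ha ((Finset.mem_powersetCard.mp hv).1 h)
      have : (insert x u).erase x = (insert x v).erase x := by rw [huv]
      rwa [Finset.erase_insert hxu, Finset.erase_insert hxv] at this
    rw [Finset.sum_image hinj]
    have hsum1 : ∑ u ∈ Finset.powersetCard 1 s, ∏ j ∈ insert x u, r j
        = ∑ i ∈ s, r x * r i := by
      rw [Finset.powersetCard_one, Finset.sum_map]
      refine Finset.sum_congr rfl fun i hi => ?_
      have hxi : x ∉ ({i} : Finset α) := by
        simp only [Finset.mem_singleton]
        intro h; subst h; exact ha hi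
      simp [Finset.prod_insert hxi]
    rw [hsum1, ← Finset.mul_sum]
    ring_nf
    rw [ih]
    ring

end HsAux

open HsAux in
/-- For `2 ≤ s ≤ n` and fixed `a_1, …, a_s`, the set
`H_s(a_1,…,a_s) = {z ∈ ℝⁿ : z_1 = a_1, …, z_s = a_s, f_z hyperbolic}` is compact. -/
theorem Hs_isCompact (n s : ℕ) (hn : 1 ≤ n) (hs2 : 2 ≤ s) (hsn : s ≤ n)
    (a : Fin n → ℝ) :
    IsCompact {z : Fin n → ℝ | (∀ i : Fin n, (i : ℕ) < s → z i = a i) ∧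
      (polyOfCoeffs n z).Splits} := by
  set S : Set (Fin n → ℝ) := {r | ∀ i : Fin n, (i : ℕ) < s → E n r i = a i} with hS
  have hset : {z : Fin n → ℝ | (∀ i : Fin n, (i : ℕ) < s → z i = a i) ∧
      (polyOfCoeffs n z).Splits} = E n '' S := by
    ext z
    constructor
    · rintro ⟨hz, hsp⟩
      obtain ⟨r, rfl⟩ := (splits_polyOfCoeffs_iff n hn z).mp hsp
      exact ⟨r, fun i hi => hz i hi, rfl⟩
    · rintro ⟨r, hr, rfl⟩
      refine ⟨fun i hi => hr i hi, ?_⟩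
      exact (splits_polyOfCoeffs_iff n hn _).mpr ⟨r, rfl⟩
  rw [hset]
  have h0n : 0 < n := hn
  have h1n : 1 < n := lt_of_lt_of_le hs2 hsn
  set i0 : Fin n := ⟨0, h0n⟩
  set i1 : Fin n := ⟨1, h1n⟩
  -- S is closed
  have hclosed : IsClosed S := by
    have : S = ⋂ i : Fin n, {r : Fin n → ℝ | (i : ℕ) < s → E n r i = a i} := by
      ext r; simp [hS, Set.mem_iInter]
    rw [this]
    refine isClosed_iInter fun i => ?_
    by_cases h : (i : ℕ) < s
    · simp only [h, true_implies]
      exact isClosed_eq ((continuous_apply i).comp (continuous_E n)) continuous_const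
    · simp only [h, false_implies, Set.setOf_true]
      exact isClosed_univ
  -- S is bounded
  set M : ℝ := (a i0) ^ 2 - 2 * a i1 with hM
  have hbdd : Bornology.IsBounded S := by
    refine (Metric.isBounded_closedBall (x := (0 : Fin n → ℝ)) (r := Real.sqrt M)).subset ?_
    intro r hr
    have h0 : E n r i0 = a i0 := hr i0 (by simp [i0]; omega)
    have h1 : E n r i1 = a i1 := hr i1 (by simp [i1]; omega)
    have hsum : ∑ i, r i = a i0 := by
      rw [← h0]
      simp only [E, i0]
      rw [Finset.powersetCard_one, Finset.sum_map]
      simp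
    have hsum2 : ∑ t ∈ Finset.univ.powersetCard 2, ∏ j ∈ t, r j = a i1 := by
      rw [← h1]
      simp only [E, i1]
    have hsq : ∑ i, (r i) ^ 2 = M := by
      have := sq_sum_eq (Finset.univ : Finset (Fin n)) r
      rw [hsum, hsum2] at this
      rw [hM]; linarith
    have hMnn : 0 ≤ M := by
      rw [← hsq]
      exact Finset.sum_nonneg fun i _ => sq_nonneg _
    rw [Metric.mem_closedBall]
    rw [dist_pi_le_iff (Real.sqrt_nonneg M)]
    intro i
    rw [Real.dist_eq]
    simp only [Pi.zero_apply, sub_zero]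
    calc |r i| = Real.sqrt ((r i) ^ 2) := (Real.sqrt_sq_eq_abs _).symm
      _ ≤ Real.sqrt M := by
          apply Real.sqrt_le_sqrt
          rw [← hsq]
          exact Finset.single_le_sum (fun j _ => sq_nonneg (r j)) (Finset.mem_univ i)
  exact ((Metric.isCompact_of_isClosed_isBounded hclosed hbdd).image (continuous_E n))
end
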